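/- arXiv:2010.09827 — 4 statements merged into one kernel-verified Lean document; each statement's English description precedes it below -/
import Mathlib

section
/- Let m ≥ 1, n ≥ 1, D ≥ 1 be integers. There exists a constant C depending only on m, n, D such that the following holds. Let E ⊆ ℝ^n be a finite set and for each x ∈ E let K(x) ⊆ ℝ^D be convex. For x ∈ E and M > 0 define Γ⃗(x,M) := { P⃗ ∈ 𝒫⃗ : |∂^α P⃗(x)| ≤ M for all |α| ≤ m−1, and P⃗(x) ∈ K(x) }. Then (Γ⃗(x,M))_{x∈E, M>0} is a (C, 1)-convex vector-valued shape field. -/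
open scoped BigOperators Classical

noncomputable section

/-- `En n` is Euclidean space `ℝ^n`. -/
abbrev En (n : ℕ) : Type := EuclideanSpace ℝ (Fin n)

/-- First-order partial derivative `∂_i f` in the `i`-th coordinate direction. -/
noncomputable def pd1 {n : ℕ} (i : Fin n) (f : En n → ℝ) : En n → ℝ :=
  fun x => fderiv ℝ f x (EuclideanSpace.single i 1)

/-- Higher-order partial derivative `∂^α f` for a multi-index `α`. -/
noncomputable def pdalpha {n : ℕ} (α : Fin n → ℕ) (f : En n → ℝ) : En n → ℝ :=
  (List.finRange n).foldr (fun i g => (pd1 i)^[α i] g) f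

/-- First-order partial derivative within a set `s`. -/
noncomputable def pd1W {n : ℕ} (s : Set (En n)) (i : Fin n) (f : En n → ℝ) : En n → ℝ :=
  fun x => fderivWithin ℝ f s x (EuclideanSpace.single i 1)

/-- Higher-order partial derivative `∂^α f` within a set `s`. -/
noncomputable def pdalphaW {n : ℕ} (s : Set (En n)) (α : Fin n → ℕ) (f : En n → ℝ) : En n → ℝ :=
  (List.finRange n).foldr (fun i g => (pd1W s i)^[α i] g) f

/-- `∂^α` of a multivariate polynomial (formal derivative). -/
noncomputable def polyPD {n : ℕ} (α : Fin n → ℕ) (p : MvPolynomial (Fin n) ℝ) :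
    MvPolynomial (Fin n) ℝ :=
  (List.finRange n).foldr (fun i q => (fun r => MvPolynomial.pderiv i r)^[α i] q) p

/-- The value `∂^α p (x)` of the `α`-th derivative of a polynomial at `x`. -/
noncomputable def polyPDval {n : ℕ} (α : Fin n → ℕ) (p : MvPolynomial (Fin n) ℝ) (x : En n) : ℝ :=
  MvPolynomial.eval (fun i => x i) (polyPD α p)

/-- The `(m-1)`-jet (Taylor polynomial of degree `≤ m-1`) of `f` at `x`. -/
noncomputable def jetScalar (m : ℕ) {n : ℕ} (f : En n → ℝ) (x : En n) :
    MvPolynomial (Fin n) ℝ :=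
  ∑ α ∈ (Finset.univ : Finset (Fin n → Fin m)).filter (fun α => (∑ i, (α i : ℕ)) ≤ m - 1),
    MvPolynomial.C (pdalpha (fun i => (α i : ℕ)) f x / ((∏ i, Nat.factorial (α i : ℕ) : ℕ) : ℝ))
      * ∏ i, (MvPolynomial.X i - MvPolynomial.C (x i)) ^ ((α i : ℕ))

/-- The `(m-1)`-jet of `f` at `x`, with derivatives taken within a set `s`. -/
noncomputable def jetScalarW (m : ℕ) {n : ℕ} (s : Set (En n)) (f : En n → ℝ) (x : En n) :
    MvPolynomial (Fin n) ℝ :=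
  ∑ α ∈ (Finset.univ : Finset (Fin n → Fin m)).filter (fun α => (∑ i, (α i : ℕ)) ≤ m - 1),
    MvPolynomial.C (pdalphaW s (fun i => (α i : ℕ)) f x / ((∏ i, Nat.factorial (α i : ℕ) : ℕ) : ℝ))
      * ∏ i, (MvPolynomial.X i - MvPolynomial.C (x i)) ^ ((α i : ℕ))

/-- The vector-valued `(m-1)`-jet `J_x F ∈ 𝒫⃗` of `F : ℝ^n → ℝ^D` at `x`. -/
noncomputable def jetD (m : ℕ) {n D : ℕ} (F : En n → Fin D → ℝ) (x : En n) :
    Fin D → MvPolynomial (Fin n) ℝ :=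
  fun j => jetScalar m (fun y => F y j) x

/-- The vector-valued `(m-1)`-jet of `F` at `x`, derivatives within `s`. -/
noncomputable def jetDW (m : ℕ) {n D : ℕ} (s : Set (En n)) (F : En n → Fin D → ℝ) (x : En n) :
    Fin D → MvPolynomial (Fin n) ℝ :=
  fun j => jetScalarW m s (fun y => F y j) x

/-- Truncation of a polynomial to total degree `≤ k`. -/
noncomputable def truncDeg {n : ℕ} (k : ℕ) (p : MvPolynomial (Fin n) ℝ) :
    MvPolynomial (Fin n) ℝ :=
  ∑ s ∈ p.support.filter (fun s => (s.sum fun _ e => e) ≤ k),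
    MvPolynomial.monomial s (MvPolynomial.coeff s p)

/-- The degree-`k` Taylor truncation of a polynomial at `x` (the jet `J_x p` of order `k`). -/
noncomputable def taylorTrunc {n : ℕ} (k : ℕ) (x : En n) (p : MvPolynomial (Fin n) ℝ) :
    MvPolynomial (Fin n) ℝ :=
  MvPolynomial.bind₁ (fun i => MvPolynomial.X i - MvPolynomial.C (x i))
    (truncDeg k (MvPolynomial.bind₁ (fun i => MvPolynomial.X i + MvPolynomial.C (x i)) p))

/-- The ring multiplication `p ⊙_x q := J_x(pq)` on degree-`k` jets at `x`. -/
noncomputable def odot {n : ℕ} (k : ℕ) (x : En n) (p q : MvPolynomial (Fin n) ℝ) :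
    MvPolynomial (Fin n) ℝ :=
  taylorTrunc k x (p * q)

/-- `(Γ x M)_{x ∈ E, M > 0}` is a shape field with jets of degree `≤ k` and `d` components:
each `Γ x M` is a convex set of `d`-tuples of polynomials of degree `≤ k`, monotone in `M`. -/
def IsShapeField {N : ℕ} (k d : ℕ) (E : Finset (En N))
    (Γ : En N → ℝ → Set (Fin d → MvPolynomial (Fin N) ℝ)) : Prop :=
  (∀ x ∈ E, ∀ M : ℝ, 0 < M → Convex ℝ (Γ x M)) ∧
  (∀ x ∈ E, ∀ M : ℝ, 0 < M → ∀ P ∈ Γ x M, ∀ j, (P j).totalDegree ≤ k) ∧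
  (∀ x ∈ E, ∀ M' M : ℝ, 0 < M' → M' ≤ M → Γ x M' ⊆ Γ x M)

/-- `(C_w, δmax)`-convexity of a shape field with jets of degree `≤ k`. -/
def SFConvex {N : ℕ} (k d : ℕ) (E : Finset (En N))
    (Γ : En N → ℝ → Set (Fin d → MvPolynomial (Fin N) ℝ)) (Cw δmax : ℝ) : Prop :=
  ∀ δ : ℝ, 0 < δ → δ ≤ δmax → ∀ x ∈ E, ∀ M : ℝ, 0 < M →
    ∀ P₁ P₂ : Fin d → MvPolynomial (Fin N) ℝ, P₁ ∈ Γ x M → P₂ ∈ Γ x M →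
    ∀ Q₁ Q₂ : MvPolynomial (Fin N) ℝ, Q₁.totalDegree ≤ k → Q₂.totalDegree ≤ k →
    (∀ α : Fin N → ℕ, (∑ i, α i) ≤ k → ∀ j,
      |polyPDval α (P₁ j - P₂ j) x| ≤ M * δ ^ (k + 1 - ∑ i, α i)) →
    (∀ α : Fin N → ℕ, (∑ i, α i) ≤ k →
      |polyPDval α Q₁ x| ≤ δ ^ (-((∑ i, α i : ℕ) : ℤ)) ∧
      |polyPDval α Q₂ x| ≤ δ ^ (-((∑ i, α i : ℕ) : ℤ))) →
    odot k x Q₁ Q₁ + odot k x Q₂ Q₂ = 1 →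
    (fun j => odot k x (odot k x Q₁ Q₁) (P₁ j) + odot k x (odot k x Q₂ Q₂) (P₂ j))
      ∈ Γ x (Cw * M)

/-- `‖(P^x)_{x ∈ S}‖_{Ẇ^m(S)} ≤ M` : the homogeneous Whitney seminorm bound. -/
def WSemiLE (m : ℕ) {N d : ℕ} (S : Finset (En N))
    (P : En N → Fin d → MvPolynomial (Fin N) ℝ) (M : ℝ) : Prop :=
  ∀ x ∈ S, ∀ y ∈ S, x ≠ y → ∀ α : Fin N → ℕ, (∑ i, α i) ≤ m - 1 → ∀ j,
    |polyPDval α (P x j - P y j) x| ≤ M * dist x y ^ (m - ∑ i, α i)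

/-- The homogeneous Whitney seminorm `‖(P^x)_{x ∈ S}‖_{Ẇ^m(S)}`. -/
noncomputable def WNormHomog (m : ℕ) {N d : ℕ} (S : Finset (En N))
    (P : En N → Fin d → MvPolynomial (Fin N) ℝ) : ℝ :=
  sSup {r : ℝ | ∃ x ∈ S, ∃ y ∈ S, x ≠ y ∧ ∃ α : Fin N → ℕ, (∑ i, α i) ≤ m - 1 ∧ ∃ j : Fin d,
    r = |polyPDval α (P x j - P y j) x| / dist x y ^ (m - ∑ i, α i)}

/-- The lower-order part of the Whitney norm. -/
noncomputable def WNormLow (m : ℕ) {N d : ℕ} (S : Finset (En N))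
    (P : En N → Fin d → MvPolynomial (Fin N) ℝ) : ℝ :=
  sSup {r : ℝ | ∃ x ∈ S, ∃ α : Fin N → ℕ, (∑ i, α i) ≤ m - 1 ∧ ∃ j : Fin d,
    r = |polyPDval α (P x j) x|}

/-- The Whitney norm `‖(P^x)_{x ∈ S}‖_{W^m(S)}`. -/
noncomputable def WNormFull (m : ℕ) {N d : ℕ} (S : Finset (En N))
    (P : En N → Fin d → MvPolynomial (Fin N) ℝ) : ℝ :=
  WNormLow m S P + WNormHomog m S P

/-- `‖F‖_{C^m} ≤ M`: all partials of order `≤ m` of all components bounded by `M`. -/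
def CmLE (m : ℕ) {n D : ℕ} (F : En n → Fin D → ℝ) (M : ℝ) : Prop :=
  ∀ α : Fin n → ℕ, (∑ i, α i) ≤ m → ∀ x : En n, ∀ j, |pdalpha α (fun y => F y j) x| ≤ M

/-- `‖F‖_{Ċ^m} ≤ M`: all partials of order `= m` of all components bounded by `M`. -/
def CmHomogLE (m : ℕ) {n D : ℕ} (F : En n → Fin D → ℝ) (M : ℝ) : Prop :=
  ∀ α : Fin n → ℕ, (∑ i, α i) = m → ∀ x : En n, ∀ j, |pdalpha α (fun y => F y j) x| ≤ M

/-- `‖F‖_{C^{m-1,1}} ≤ M`. -/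
def Cm11LE (m : ℕ) {n D : ℕ} (F : En n → Fin D → ℝ) (M : ℝ) : Prop :=
  (∀ α : Fin n → ℕ, (∑ i, α i) ≤ m - 1 → ∀ x : En n, ∀ j,
    |pdalpha α (fun y => F y j) x| ≤ M) ∧
  (∀ α : Fin n → ℕ, (∑ i, α i) = m - 1 → ∀ j, ∀ x y : En n,
    |pdalpha α (fun z => F z j) x - pdalpha α (fun z => F z j) y| ≤ M * dist x y)

/-- A closed cube in `ℝ^n` with lower corner `a` and side length `δ`. -/
def cube {n : ℕ} (a : En n) (δ : ℝ) : Set (En n) := {y | ∀ i, a i ≤ y i ∧ y i ≤ a i + δ}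

/-- The embedding `ℝ^n → ℝ^{n+D}`, `x ↦ (x, 0)`. -/
noncomputable def embed (n D : ℕ) (x : En n) : En (n + D) :=
  (EuclideanSpace.equiv (Fin (n + D)) ℝ).symm
    (Fin.append (fun i : Fin n => x i) (fun _ : Fin D => (0 : ℝ)))

/-- The projection `ℝ^{n+D} → ℝ^n`, `(x, ξ) ↦ x`. -/
noncomputable def projn (n D : ℕ) (z : En (n + D)) : En n :=
  (EuclideanSpace.equiv (Fin n) ℝ).symm (fun i => z (Fin.castAdd D i))

/-- Restriction of a polynomial on `ℝ^{n+D}` to `ℝ^n × {0}`, as a polynomial on `ℝ^n`. -/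
noncomputable def restrict0 (n D : ℕ) (p : MvPolynomial (Fin (n + D)) ℝ) :
    MvPolynomial (Fin n) ℝ :=
  MvPolynomial.aeval
    (Fin.append (fun i : Fin n => (MvPolynomial.X i : MvPolynomial (Fin n) ℝ))
      (fun _ : Fin D => 0)) p


section SFAux
open MvPolynomial

variable {n : ℕ}

/-- Translation `p(X) ↦ p(X + x)`. -/
noncomputable def sfPhi (x : Fin n → ℝ) : MvPolynomial (Fin n) ℝ →ₐ[ℝ] MvPolynomial (Fin n) ℝ :=
  bind₁ (fun i => X i + C (x i))

/-- Translation `p(X) ↦ p(X - x)`. -/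
noncomputable def sfPsi (x : Fin n → ℝ) : MvPolynomial (Fin n) ℝ →ₐ[ℝ] MvPolynomial (Fin n) ℝ :=
  bind₁ (fun i => X i - C (x i))

theorem sfPhi_psi (x : Fin n → ℝ) (p : MvPolynomial (Fin n) ℝ) : sfPhi x (sfPsi x p) = p := by
  simp [sfPhi, sfPsi, bind₁_bind₁]

theorem sfPsi_phi (x : Fin n → ℝ) (p : MvPolynomial (Fin n) ℝ) : sfPsi x (sfPhi x p) = p := by
  simp [sfPhi, sfPsi, bind₁_bind₁]

theorem sf_pderiv_phi (x : Fin n → ℝ) (i : Fin n) (p : MvPolynomial (Fin n) ℝ) :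
    pderiv i (sfPhi x p) = sfPhi x (pderiv i p) := by
  induction p using MvPolynomial.induction_on with
  | C a => simp [sfPhi]
  | add p q hp hq => simp [map_add, hp, hq]
  | mul_X p j hp =>
    by_cases hij : i = j
    · subst hij
      simp [map_mul, sfPhi, bind₁_X_right, pderiv_mul, pderiv_X_self, Pi.single_apply]
      exact Or.inl hp
    · simp [map_mul, sfPhi, bind₁_X_right, pderiv_mul, pderiv_X_of_ne hij, Pi.single_apply, hij]
      exact Or.inl hp

theorem sf_iter_pderiv_phi (x : Fin n → ℝ) (i : Fin n) (j : ℕ) (p : MvPolynomial (Fin n) ℝ) :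
    (fun r => pderiv i r)^[j] (sfPhi x p) = sfPhi x ((fun r => pderiv i r)^[j] p) := by
  induction j with
  | zero => simp
  | succ j ih => rw [Function.iterate_succ_apply', Function.iterate_succ_apply', ih,
      sf_pderiv_phi]

theorem sf_foldr_phi (x : Fin n → ℝ) (α : Fin n → ℕ) (l : List (Fin n))
    (p : MvPolynomial (Fin n) ℝ) :
    l.foldr (fun i q => (fun r => MvPolynomial.pderiv i r)^[α i] q) (sfPhi x p)
      = sfPhi x (l.foldr (fun i q => (fun r => MvPolynomial.pderiv i r)^[α i] q) p) := by
  induction l with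
  | nil => rfl
  | cons i l ih => simp only [List.foldr_cons, ih, sf_iter_pderiv_phi]

theorem sf_polyPD_phi (x : Fin n → ℝ) (α : Fin n → ℕ) (p : MvPolynomial (Fin n) ℝ) :
    polyPD α (sfPhi x p) = sfPhi x (polyPD α p) :=
  sf_foldr_phi x α _ p

theorem sf_iter_pderiv_add (i : Fin n) (j : ℕ) (p q : MvPolynomial (Fin n) ℝ) :
    (fun r => pderiv i r)^[j] (p + q)
      = (fun r => pderiv i r)^[j] p + (fun r => pderiv i r)^[j] q := by
  induction j with
  | zero => simp
  | succ j ih => rw [Function.iterate_succ_apply', Function.iterate_succ_apply',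
      Function.iterate_succ_apply', ih, map_add]

theorem sf_iter_pderiv_smul (i : Fin n) (j : ℕ) (c : ℝ) (p : MvPolynomial (Fin n) ℝ) :
    (fun r => pderiv i r)^[j] (c • p) = c • (fun r => pderiv i r)^[j] p := by
  induction j with
  | zero => simp
  | succ j ih => rw [Function.iterate_succ_apply', Function.iterate_succ_apply', ih, MvPolynomial.smul_eq_C_mul, MvPolynomial.smul_eq_C_mul, pderiv_C_mul]

theorem sf_polyPD_add (α : Fin n → ℕ) (p q : MvPolynomial (Fin n) ℝ) :
    polyPD α (p + q) = polyPD α p + polyPD α q := by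
  unfold polyPD
  induction (List.finRange n) with
  | nil => rfl
  | cons i l ih => simp only [List.foldr_cons, ih, sf_iter_pderiv_add]

theorem sf_polyPD_smul (α : Fin n → ℕ) (c : ℝ) (p : MvPolynomial (Fin n) ℝ) :
    polyPD α (c • p) = c • polyPD α p := by
  unfold polyPD
  induction (List.finRange n) with
  | nil => rfl
  | cons i l ih => simp only [List.foldr_cons, ih, sf_iter_pderiv_smul]

end SFAux
section SFAux2
open MvPolynomial

variable {n : ℕ}

theorem sf_iter_pderiv_monomial (i : Fin n) (j : ℕ) (s : Fin n →₀ ℕ) (c : ℝ) :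
    (fun r => pderiv i r)^[j] (monomial s c)
      = monomial (s - Finsupp.single i j) (c * ((s i).descFactorial j : ℝ)) := by
  induction j with
  | zero => simp
  | succ j ih =>
    rw [Function.iterate_succ_apply', ih, pderiv_monomial]
    congr 1
    · rw [tsub_tsub, ← Finsupp.single_add]
    · rw [Finsupp.tsub_apply, Finsupp.single_eq_same, Nat.descFactorial_succ]
      rw [Nat.cast_mul]
      ring

theorem sf_listsum_single_apply_notmem (α : Fin n → ℕ) (i : Fin n) (l : List (Fin n))
    (hi : i ∉ l) :
    ((l.map fun i' => Finsupp.single i' (α i')).sum) i = 0 := by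
  induction l with
  | nil => simp
  | cons a l ih =>
    simp only [List.mem_cons, not_or] at hi
    simp [Finsupp.add_apply, Finsupp.single_apply, Ne.symm hi.1, ih hi.2,
      (show ¬ a = i from fun h => hi.1 h.symm)]

theorem sf_foldr_monomial (α : Fin n → ℕ) (s : Fin n →₀ ℕ) (c : ℝ) :
    ∀ l : List (Fin n), l.Nodup →
    l.foldr (fun i q => (fun r => MvPolynomial.pderiv i r)^[α i] q) (monomial s c)
      = monomial (s - (l.map fun i => Finsupp.single i (α i)).sum)
          (c * (l.map fun i => (((s i).descFactorial (α i) : ℕ) : ℝ)).prod) := by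
  intro l hl
  induction l with
  | nil => simp
  | cons i l ih =>
    rw [List.nodup_cons] at hl
    rw [List.foldr_cons, ih hl.2, sf_iter_pderiv_monomial]
    congr 1
    · rw [tsub_tsub, List.map_cons, List.sum_cons, add_comm]
    · rw [Finsupp.tsub_apply, sf_listsum_single_apply_notmem α i l hl.1, Nat.sub_zero,
        List.map_cons, List.prod_cons]
      ring

theorem sf_polyPD_monomial (α : Fin n → ℕ) (s : Fin n →₀ ℕ) (c : ℝ) :
    polyPD α (monomial s c)
      = monomial (s - Finsupp.equivFunOnFinite.symm α)
          (c * ∏ i, (((s i).descFactorial (α i) : ℕ) : ℝ)) := by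
  rw [polyPD, sf_foldr_monomial α s c _ (List.nodup_finRange n)]
  have h1 : ((List.finRange n).map fun i => Finsupp.single i (α i)).sum
      = Finsupp.equivFunOnFinite.symm α := by
    rw [← Fin.sum_univ_def]
    ext j
    rw [Finsupp.finset_sum_apply]
    simp [Finsupp.single_apply, Finsupp.equivFunOnFinite]
  have h2 : ((List.finRange n).map fun i => (((s i).descFactorial (α i) : ℕ) : ℝ)).prod
      = ∏ i, (((s i).descFactorial (α i) : ℕ) : ℝ) := (Fin.prod_univ_def _).symm
  rw [h1, h2]

end SFAux2
section SFAux3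
open MvPolynomial

variable {n : ℕ}

theorem sf_eval_zero_monomial (t : Fin n →₀ ℕ) (c : ℝ) :
    eval (fun _ => (0 : ℝ)) (monomial t c) = if t = 0 then c else 0 := by
  rw [eval_monomial]
  by_cases ht : t = 0
  · simp [ht]
  · rw [if_neg ht]
    obtain ⟨i, hi⟩ := Finsupp.support_nonempty_iff.mpr ht
    rw [Finsupp.prod]
    rw [Finset.prod_eq_zero hi (zero_pow (Finsupp.mem_support_iff.mp hi))]
    ring

theorem sf_eval0_polyPD (α : Fin n → ℕ) (q : MvPolynomial (Fin n) ℝ) :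
    eval (fun _ => (0 : ℝ)) (polyPD α q)
      = (∏ i, ((α i).factorial : ℝ)) * coeff (Finsupp.equivFunOnFinite.symm α) q := by
  induction q using MvPolynomial.induction_on' with
  | add p q hp hq => rw [sf_polyPD_add, map_add, hp, hq, coeff_add]; ring
  | monomial s c =>
    rw [sf_polyPD_monomial, sf_eval_zero_monomial, coeff_monomial]
    by_cases hs : s = Finsupp.equivFunOnFinite.symm α
    · subst hs
      have hsi : ∀ i, (Finsupp.equivFunOnFinite.symm α) i = α i := fun i => rfl
      rw [if_pos (tsub_self _), if_pos rfl]
      simp only [hsi, Nat.descFactorial_self]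
      ring
    · rw [if_neg hs]
      by_cases h0 : s - Finsupp.equivFunOnFinite.symm α = 0
      · rw [if_pos h0]
        have hle : s ≤ Finsupp.equivFunOnFinite.symm α := tsub_eq_zero_iff_le.mp h0
        have : ∃ i, s i ≠ α i := by
          by_contra hc
          push_neg at hc
          exact hs (Finsupp.ext fun i => hc i)
        obtain ⟨i, hi⟩ := this
        have hlt : s i < α i := lt_of_le_of_ne (Finsupp.le_def.mp hle i) hi
        rw [Finset.prod_eq_zero (Finset.mem_univ i)
          (by exact_mod_cast congrArg (Nat.cast (R := ℝ)) (Nat.descFactorial_of_lt hlt))]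
        ring
      · rw [if_neg h0]; ring

theorem sf_eval_eq_eval0_phi (x : Fin n → ℝ) (p : MvPolynomial (Fin n) ℝ) :
    eval x p = eval (fun _ => (0 : ℝ)) (sfPhi x p) := by
  rw [sfPhi, show (eval (fun _ => (0:ℝ))) = (eval₂Hom (RingHom.id ℝ) (fun _ => (0:ℝ)) : _) from rfl,
    eval₂Hom_bind₁]
  simp

theorem sf_polyPDval_eq (α : Fin n → ℕ) (x : Fin n → ℝ) (p : MvPolynomial (Fin n) ℝ) :
    MvPolynomial.eval x (polyPD α p)
      = (∏ i, ((α i).factorial : ℝ)) * coeff (Finsupp.equivFunOnFinite.symm α) (sfPhi x p) := by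
  rw [sf_eval_eq_eval0_phi, ← sf_polyPD_phi, sf_eval0_polyPD]

end SFAux3
section SFAux4
open MvPolynomial

variable {n : ℕ}

theorem sf_coeff_truncDeg (k : ℕ) (t : Fin n →₀ ℕ) (p : MvPolynomial (Fin n) ℝ) :
    coeff t (truncDeg k p) = if (t.sum fun _ e => e) ≤ k then coeff t p else 0 := by
  rw [truncDeg, coeff_sum]
  simp only [coeff_monomial]
  rw [Finset.sum_ite_eq' (p.support.filter fun s => (s.sum fun _ e => e) ≤ k) t
    (fun s => coeff s p)]
  by_cases hs : t ∈ p.support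
  · simp [Finset.mem_filter, hs]
  · simp [Finset.mem_filter, hs, notMem_support_iff.mp hs]

theorem sf_truncDeg_totalDegree_le (k : ℕ) (p : MvPolynomial (Fin n) ℝ) :
    (truncDeg k p).totalDegree ≤ k := by
  rw [truncDeg]
  refine le_trans (totalDegree_finset_sum _ _) (Finset.sup_le fun s hs => ?_)
  rw [Finset.mem_filter] at hs
  exact le_trans (totalDegree_monomial_le _ _) hs.2

theorem sf_psi_totalDegree_le (x : Fin n → ℝ) (p : MvPolynomial (Fin n) ℝ) :
    (sfPsi x p).totalDegree ≤ p.totalDegree := by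
  have hd : ∀ i : Fin n, (X i - C (x i) : MvPolynomial (Fin n) ℝ).totalDegree ≤ 1 := by
    intro i
    rw [sub_eq_add_neg]
    refine le_trans (totalDegree_add _ _) (max_le (totalDegree_X i).le ?_)
    rw [totalDegree_neg, totalDegree_C]
    exact Nat.zero_le 1
  conv_lhs => rw [p.as_sum, map_sum]
  refine le_trans (totalDegree_finset_sum _ _) (Finset.sup_le fun s hs => ?_)
  have h1 : (sfPsi x) (monomial s (coeff s p))
      = C (coeff s p) * s.prod fun i e => (X i - C (x i)) ^ e := by
    rw [sfPsi, bind₁, aeval_monomial, algebraMap_eq]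
  rw [h1]
  refine le_trans (totalDegree_mul _ _) ?_
  rw [totalDegree_C, zero_add, Finsupp.prod]
  refine le_trans (totalDegree_finset_prod _ _) ?_
  calc ∑ i ∈ s.support, ((X i - C (x i) : MvPolynomial (Fin n) ℝ) ^ s i).totalDegree
      ≤ ∑ i ∈ s.support, s i := by
        refine Finset.sum_le_sum fun i _ => ?_
        refine le_trans (totalDegree_pow _ _) ?_
        calc s i * (X i - C (x i) : MvPolynomial (Fin n) ℝ).totalDegree
            ≤ s i * 1 := Nat.mul_le_mul_left (s i) (hd i)
          _ = s i := Nat.mul_one _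
    _ ≤ p.totalDegree := le_totalDegree hs

theorem sf_phi_taylorTrunc (k : ℕ) (x : En n) (p : MvPolynomial (Fin n) ℝ) :
    sfPhi (fun i => x i) (taylorTrunc k x p)
      = truncDeg k (sfPhi (fun i => x i) p) := by
  rw [taylorTrunc]
  exact sfPhi_psi _ _

theorem sf_taylorTrunc_totalDegree_le (k : ℕ) (x : En n) (p : MvPolynomial (Fin n) ℝ) :
    (taylorTrunc k x p).totalDegree ≤ k := by
  rw [taylorTrunc]
  exact le_trans (sf_psi_totalDegree_le (fun i => x i) _) (sf_truncDeg_totalDegree_le k _)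

theorem sf_taylorTrunc_add (k : ℕ) (x : En n) (p q : MvPolynomial (Fin n) ℝ) :
    taylorTrunc k x (p + q) = taylorTrunc k x p + taylorTrunc k x q := by
  have htr : ∀ a b : MvPolynomial (Fin n) ℝ, truncDeg k (a + b) = truncDeg k a + truncDeg k b := by
    intro a b
    apply MvPolynomial.ext
    intro t
    simp only [coeff_add, sf_coeff_truncDeg]
    split <;> simp
  show sfPsi _ (truncDeg k (sfPhi _ (p + q))) = sfPsi _ (truncDeg k (sfPhi _ p)) + sfPsi _ (truncDeg k (sfPhi _ q))
  rw [map_add, htr, map_add]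

end SFAux4
section SFAux5
open MvPolynomial

variable {n : ℕ}

theorem sf_polyPDval_coeff (α : Fin n → ℕ) (x : En n) (p : MvPolynomial (Fin n) ℝ) :
    polyPDval α p x
      = (∏ i, ((α i).factorial : ℝ))
          * coeff (Finsupp.equivFunOnFinite.symm α) (sfPhi (fun i => x i) p) :=
  sf_polyPDval_eq α (fun i => x i) p

theorem sf_fact_prod_ge_one (α : Fin n → ℕ) : (1 : ℝ) ≤ ∏ i, ((α i).factorial : ℝ) := by
  have : ((1 : ℕ) : ℝ) ≤ ((∏ i, (α i).factorial : ℕ) : ℝ) := by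
    exact_mod_cast Finset.one_le_prod' fun i _ => (α i).factorial_pos
  rw [Nat.cast_prod] at this
  simpa using this

theorem sf_fact_prod_pos (α : Fin n → ℕ) : (0 : ℝ) < ∏ i, ((α i).factorial : ℝ) :=
  lt_of_lt_of_le one_pos (sf_fact_prod_ge_one α)

theorem sf_abs_coeff_le (α : Fin n → ℕ) (x : En n) (p : MvPolynomial (Fin n) ℝ) :
    |coeff (Finsupp.equivFunOnFinite.symm α) (sfPhi (fun i => x i) p)| ≤ |polyPDval α p x| := by
  rw [sf_polyPDval_coeff, abs_mul, abs_of_pos (sf_fact_prod_pos α)]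
  nlinarith [abs_nonneg (coeff (Finsupp.equivFunOnFinite.symm α) (sfPhi (fun i => x i) p)),
    sf_fact_prod_ge_one α]

theorem sf_abs_polyPDval_le (α : Fin n → ℕ) (x : En n) (p : MvPolynomial (Fin n) ℝ) (B : ℝ)
    (h : |coeff (Finsupp.equivFunOnFinite.symm α) (sfPhi (fun i => x i) p)| ≤ B) :
    |polyPDval α p x| ≤ (∏ i, ((α i).factorial : ℝ)) * B := by
  rw [sf_polyPDval_coeff, abs_mul, abs_of_pos (sf_fact_prod_pos α)]
  exact mul_le_mul_of_nonneg_left h (le_of_lt (sf_fact_prod_pos α))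

theorem sf_polyPDval_add (α : Fin n → ℕ) (x : En n) (p q : MvPolynomial (Fin n) ℝ) :
    polyPDval α (p + q) x = polyPDval α p x + polyPDval α q x := by
  rw [polyPDval, polyPDval, polyPDval, sf_polyPD_add, map_add]

theorem sf_polyPDval_smul (α : Fin n → ℕ) (x : En n) (c : ℝ) (p : MvPolynomial (Fin n) ℝ) :
    polyPDval α (c • p) x = c * polyPDval α p x := by
  rw [polyPDval, polyPDval, sf_polyPD_smul, smul_eq_C_mul, map_mul, eval_C]

theorem sf_polyPDval_neg (α : Fin n → ℕ) (x : En n) (p : MvPolynomial (Fin n) ℝ) :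
    polyPDval α (-p) x = -polyPDval α p x := by
  have := sf_polyPDval_smul α x (-1) p
  simpa using this

theorem sf_polyPDval_sub (α : Fin n → ℕ) (x : En n) (p q : MvPolynomial (Fin n) ℝ) :
    polyPDval α (p - q) x = polyPDval α p x - polyPDval α q x := by
  rw [sub_eq_add_neg, sf_polyPDval_add, sf_polyPDval_neg, sub_eq_add_neg]

theorem sf_symm_sum (α : Fin n → ℕ) :
    ((Finsupp.equivFunOnFinite.symm α).sum fun _ e => e) = ∑ i, α i := by
  rw [Finsupp.sum_fintype]
  · rfl
  · intro i; rfl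

theorem sf_finsupp_sum_eq (β : Fin n →₀ ℕ) : (β.sum fun _ e => e) = ∑ i, β i := by
  rw [Finsupp.sum_fintype]
  intro i; rfl

theorem sf_symm_coe (β : Fin n →₀ ℕ) : Finsupp.equivFunOnFinite.symm (fun i => β i) = β := by
  exact Finsupp.equivFunOnFinite_symm_coe β

theorem sf_polyPD_zero_index (p : MvPolynomial (Fin n) ℝ) :
    polyPD (fun _ : Fin n => 0) p = p := by
  rw [polyPD]
  induction (List.finRange n) with
  | nil => rfl
  | cons i l ih => rw [List.foldr_cons, ih]; rfl

theorem sf_eval_eq_coeff_zero (x : En n) (p : MvPolynomial (Fin n) ℝ) :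
    eval (fun i => x i) p = coeff 0 (sfPhi (fun i => x i) p) := by
  have h := sf_polyPDval_coeff (fun _ : Fin n => 0) x p
  rw [polyPDval, sf_polyPD_zero_index] at h
  have h0 : (Finsupp.equivFunOnFinite.symm (fun _ : Fin n => 0) : Fin n →₀ ℕ) = 0 := by
    ext i; rfl
  rw [h0] at h
  simpa using h

end SFAux5
section SFAux6
open MvPolynomial

variable {n : ℕ}

theorem sf_mem_antidiagonal_le {β : Fin n →₀ ℕ} {μν : (Fin n →₀ ℕ) × (Fin n →₀ ℕ)}
    (h : μν ∈ Finset.HasAntidiagonal.antidiagonal β) (i : Fin n) : μν.1 i ≤ β i := by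
  rw [Finset.HasAntidiagonal.mem_antidiagonal] at h
  rw [← h, Finsupp.add_apply]
  exact Nat.le_add_right _ _

theorem sf_mem_antidiagonal_sum {β : Fin n →₀ ℕ} {μν : (Fin n →₀ ℕ) × (Fin n →₀ ℕ)}
    (h : μν ∈ Finset.HasAntidiagonal.antidiagonal β) :
    (∑ i, μν.1 i) + (∑ i, μν.2 i) = ∑ i, β i := by
  rw [Finset.HasAntidiagonal.mem_antidiagonal] at h
  rw [← Finset.sum_add_distrib]
  exact Finset.sum_congr rfl fun i _ => by rw [← Finsupp.add_apply, h]

theorem sf_card_antidiagonal_le (k : ℕ) (β : Fin n →₀ ℕ) (hβ : ∀ i, β i ≤ k) :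
    (Finset.HasAntidiagonal.antidiagonal β).card ≤ (k + 1) ^ n := by
  have := Finset.card_le_card_of_injOn
    (f := fun μν : (Fin n →₀ ℕ) × (Fin n →₀ ℕ) => fun i => (⟨min (μν.1 i) k, by
      exact Nat.lt_succ_of_le (min_le_right _ _)⟩ : Fin (k + 1)))
    (s := Finset.HasAntidiagonal.antidiagonal β) (t := (Finset.univ : Finset (Fin n → Fin (k + 1))))
    (fun _ _ => Finset.mem_univ _)
    (by
      intro a ha b hb hab
      have ha1 : ∀ i, a.1 i = b.1 i := by
        intro i
        have := congrFun hab i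
        have h1 : min (a.1 i) k = a.1 i := min_eq_left ((sf_mem_antidiagonal_le (Finset.mem_coe.mp ha) i).trans (hβ i))
        have h2 : min (b.1 i) k = b.1 i := min_eq_left ((sf_mem_antidiagonal_le (Finset.mem_coe.mp hb) i).trans (hβ i))
        have := congrArg Fin.val this
        simpa [h1, h2] using this
      have hfst : a.1 = b.1 := Finsupp.ext ha1
      rw [Finset.mem_coe, Finset.HasAntidiagonal.mem_antidiagonal] at ha hb
      have hsnd : a.2 = b.2 := by
        have : a.1 + a.2 = a.1 + b.2 := by rw [ha, hfst, hb]
        exact add_left_cancel this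
      exact Prod.ext hfst hsnd)
  calc (Finset.HasAntidiagonal.antidiagonal β).card ≤ (Finset.univ : Finset (Fin n → Fin (k + 1))).card := this
    _ = (k + 1) ^ n := by simp [Finset.card_univ]

theorem sf_abs_coeff_mul (β : Fin n →₀ ℕ) (p q : MvPolynomial (Fin n) ℝ) :
    |coeff β (p * q)|
      ≤ ∑ μν ∈ Finset.HasAntidiagonal.antidiagonal β, |coeff μν.1 p| * |coeff μν.2 q| := by
  rw [coeff_mul]
  refine le_trans (Finset.abs_sum_le_sum_abs _ _) ?_
  exact le_of_eq (Finset.sum_congr rfl fun μν _ => abs_mul _ _)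

end SFAux6
section SFAux7
open MvPolynomial

variable {n : ℕ}

theorem sf_coeff_phi_odot (k : ℕ) (x : En n) (p q : MvPolynomial (Fin n) ℝ)
    (t : Fin n →₀ ℕ) (ht : (∑ i, t i) ≤ k) :
    coeff t (sfPhi (fun i => x i) (odot k x p q))
      = coeff t (sfPhi (fun i => x i) p * sfPhi (fun i => x i) q) := by
  show coeff t (sfPhi (fun i => x i) (taylorTrunc k x (p * q))) = _
  rw [sf_phi_taylorTrunc, sf_coeff_truncDeg, if_pos (by rwa [sf_finsupp_sum_eq]), map_mul]

theorem sf_eval_odot (k : ℕ) (x : En n) (p q : MvPolynomial (Fin n) ℝ) :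
    eval (fun i => x i) (odot k x p q)
      = eval (fun i => x i) p * eval (fun i => x i) q := by
  rw [sf_eval_eq_coeff_zero, sf_coeff_phi_odot k x p q 0 (by simp), ← map_mul,
    ← sf_eval_eq_coeff_zero, map_mul]

theorem sf_coeff_bound_of_pdval (x : En n) (p : MvPolynomial (Fin n) ℝ)
    (σ : Fin n →₀ ℕ) (B : ℝ) (h : |polyPDval (fun i => σ i) p x| ≤ B) :
    |coeff σ (sfPhi (fun i => x i) p)| ≤ B := by
  have h2 := sf_abs_coeff_le (fun i => σ i) x p
  rw [sf_symm_coe] at h2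
  exact h2.trans h

theorem sf_apply_le_sum (μ : Fin n →₀ ℕ) (i : Fin n) : μ i ≤ ∑ i', μ i' :=
  Finset.single_le_sum (fun _ _ => Nat.zero_le _) (Finset.mem_univ i)

theorem sf_fun_apply_le_sum (α : Fin n → ℕ) (i : Fin n) : α i ≤ ∑ i', α i' :=
  Finset.single_le_sum (fun _ _ => Nat.zero_le _) (Finset.mem_univ i)

theorem sf_fact_prod_le (α : Fin n → ℕ) (k : ℕ) (h : ∀ i, α i ≤ k) :
    ∏ i, ((α i).factorial : ℝ) ≤ ((k.factorial : ℕ) : ℝ) ^ n := by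
  calc ∏ i, (((α i).factorial : ℕ) : ℝ) ≤ ∏ _i : Fin n, ((k.factorial : ℕ) : ℝ) := by
        refine Finset.prod_le_prod (fun i _ => by positivity) fun i _ => ?_
        exact_mod_cast Nat.factorial_le (h i)
    _ = ((k.factorial : ℕ) : ℝ) ^ n := by simp [Finset.prod_const, Finset.card_univ]

theorem sf_coeff_theta_bound (k : ℕ) (x : En n) (Q : MvPolynomial (Fin n) ℝ) (δ : ℝ)
    (hδ : 0 < δ)
    (hQ : ∀ σ : Fin n →₀ ℕ, (∑ i, σ i) ≤ k →
      |coeff σ (sfPhi (fun i => x i) Q)| ≤ (δ ^ (∑ i, σ i))⁻¹)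
    (μ : Fin n →₀ ℕ) (hμ : (∑ i, μ i) ≤ k) :
    |coeff μ (sfPhi (fun i => x i) (odot k x Q Q))|
      ≤ (((k + 1) ^ n : ℕ) : ℝ) * (δ ^ (∑ i, μ i))⁻¹ := by
  rw [sf_coeff_phi_odot k x Q Q μ hμ]
  refine le_trans (sf_abs_coeff_mul μ _ _) ?_
  have hterm : ∀ στ ∈ Finset.HasAntidiagonal.antidiagonal μ,
      |coeff στ.1 (sfPhi (fun i => x i) Q)| * |coeff στ.2 (sfPhi (fun i => x i) Q)|
        ≤ (δ ^ (∑ i, μ i))⁻¹ := by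
    intro στ hστ
    have hsum := sf_mem_antidiagonal_sum hστ
    have h1 := hQ στ.1 (by omega)
    have h2 := hQ στ.2 (by omega)
    calc |coeff στ.1 (sfPhi (fun i => x i) Q)| * |coeff στ.2 (sfPhi (fun i => x i) Q)|
        ≤ (δ ^ (∑ i, στ.1 i))⁻¹ * (δ ^ (∑ i, στ.2 i))⁻¹ :=
          mul_le_mul h1 h2 (abs_nonneg _) (by positivity)
      _ = (δ ^ (∑ i, μ i))⁻¹ := by
          rw [← mul_inv, ← pow_add, hsum]
  calc ∑ στ ∈ Finset.HasAntidiagonal.antidiagonal μ,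
        |coeff στ.1 (sfPhi (fun i => x i) Q)| * |coeff στ.2 (sfPhi (fun i => x i) Q)|
      ≤ (Finset.HasAntidiagonal.antidiagonal μ).card • (δ ^ (∑ i, μ i))⁻¹ :=
        Finset.sum_le_card_nsmul _ _ _ hterm
    _ = ((Finset.HasAntidiagonal.antidiagonal μ).card : ℝ) * (δ ^ (∑ i, μ i))⁻¹ := by
        rw [nsmul_eq_mul]
    _ ≤ (((k + 1) ^ n : ℕ) : ℝ) * (δ ^ (∑ i, μ i))⁻¹ := by
        refine mul_le_mul_of_nonneg_right ?_ (by positivity)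
        exact_mod_cast sf_card_antidiagonal_le k μ fun i => (sf_apply_le_sum μ i).trans hμ

theorem sf_est (k : ℕ) (x : En n) (M δ : ℝ) (hδ : 0 < δ) (hδ1 : δ ≤ 1) (hM : 0 ≤ M)
    (B R : MvPolynomial (Fin n) ℝ)
    (hB : ∀ μ : Fin n →₀ ℕ, (∑ i, μ i) ≤ k →
      |coeff μ (sfPhi (fun i => x i) B)| ≤ (((k + 1) ^ n : ℕ) : ℝ) * (δ ^ (∑ i, μ i))⁻¹)
    (hR : ∀ ν : Fin n →₀ ℕ, (∑ i, ν i) ≤ k →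
      |coeff ν (sfPhi (fun i => x i) R)| ≤ M * δ ^ (k + 1 - ∑ i, ν i))
    (t : Fin n →₀ ℕ) (ht : (∑ i, t i) ≤ k) :
    |coeff t (sfPhi (fun i => x i) B * sfPhi (fun i => x i) R)|
      ≤ (((k + 1) ^ n : ℕ) : ℝ) * (((k + 1) ^ n : ℕ) : ℝ) * M := by
  refine le_trans (sf_abs_coeff_mul t _ _) ?_
  have hterm : ∀ μν ∈ Finset.HasAntidiagonal.antidiagonal t,
      |coeff μν.1 (sfPhi (fun i => x i) B)| * |coeff μν.2 (sfPhi (fun i => x i) R)|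
        ≤ (((k + 1) ^ n : ℕ) : ℝ) * M := by
    intro μν hμν
    have hsum := sf_mem_antidiagonal_sum hμν
    have h1 := hB μν.1 (by omega)
    have h2 := hR μν.2 (by omega)
    have hd : δ ^ (k + 1 - ∑ i, μν.2 i) = δ ^ (∑ i, μν.1 i) * δ ^ (k + 1 - ∑ i, t i) := by
      rw [← pow_add]
      congr 1
      omega
    have hδne : δ ^ (∑ i, μν.1 i) ≠ 0 := by positivity
    calc |coeff μν.1 (sfPhi (fun i => x i) B)| * |coeff μν.2 (sfPhi (fun i => x i) R)|
        ≤ ((((k + 1) ^ n : ℕ) : ℝ) * (δ ^ (∑ i, μν.1 i))⁻¹)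
            * (M * δ ^ (k + 1 - ∑ i, μν.2 i)) :=
          mul_le_mul h1 h2 (abs_nonneg _) (by positivity)
      _ = (((k + 1) ^ n : ℕ) : ℝ) * M * δ ^ (k + 1 - ∑ i, t i) := by
          rw [hd]
          field_simp
      _ ≤ (((k + 1) ^ n : ℕ) : ℝ) * M * 1 := by
          refine mul_le_mul_of_nonneg_left (pow_le_one₀ hδ.le hδ1) (by positivity)
      _ = (((k + 1) ^ n : ℕ) : ℝ) * M := mul_one _
  calc ∑ μν ∈ Finset.HasAntidiagonal.antidiagonal t,
        |coeff μν.1 (sfPhi (fun i => x i) B)| * |coeff μν.2 (sfPhi (fun i => x i) R)|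
      ≤ (Finset.HasAntidiagonal.antidiagonal t).card • ((((k + 1) ^ n : ℕ) : ℝ) * M) :=
        Finset.sum_le_card_nsmul _ _ _ hterm
    _ = ((Finset.HasAntidiagonal.antidiagonal t).card : ℝ) * ((((k + 1) ^ n : ℕ) : ℝ) * M) := by
        rw [nsmul_eq_mul]
    _ ≤ (((k + 1) ^ n : ℕ) : ℝ) * ((((k + 1) ^ n : ℕ) : ℝ) * M) := by
        refine mul_le_mul_of_nonneg_right ?_ (by positivity)
        exact_mod_cast sf_card_antidiagonal_le k t fun i => (sf_apply_le_sum t i).trans ht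
    _ = (((k + 1) ^ n : ℕ) : ℝ) * (((k + 1) ^ n : ℕ) : ℝ) * M := by ring

end SFAux7
open MvPolynomial
/-- The shape field associated to a selection problem: jets of norm `≤ M` at `x` whose
value at `x` lies in `K x`. -/
noncomputable def GammaK (m : ℕ) {n D : ℕ} (K : En n → Set (Fin D → ℝ)) :
    En n → ℝ → Set (Fin D → MvPolynomial (Fin n) ℝ) :=
  fun x M => {P | (∀ j, (P j).totalDegree ≤ m - 1) ∧
    (∀ α : Fin n → ℕ, (∑ i, α i) ≤ m - 1 → ∀ j, |polyPDval α (P j) x| ≤ M) ∧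
    (fun j => MvPolynomial.eval (fun i => x i) (P j)) ∈ K x}

/-- If each `K x` is convex, then the family `Γ⃗(x,M) = {P⃗ ∈ 𝒫⃗ : |∂^α P⃗(x)| ≤ M for
|α| ≤ m-1, P⃗(x) ∈ K(x)}` is a `(C,1)`-convex vector-valued shape field, with
`C = C(m,n,D)`. -/
theorem selection_shape_field_is_Cw_convex
    (m n D : ℕ) (hm : 1 ≤ m) (hn : 1 ≤ n) (hD : 1 ≤ D) :
    ∃ C : ℝ, 0 < C ∧
      ∀ E : Finset (En n), ∀ K : En n → Set (Fin D → ℝ),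
        (∀ x ∈ E, Convex ℝ (K x)) →
        IsShapeField (m - 1) D E (GammaK m K) ∧
        SFConvex (m - 1) D E (GammaK m K) C 1 := by
  refine ⟨1 + (((m - 1).factorial : ℕ) : ℝ) ^ n * (((m - 1 + 1) ^ n : ℕ) : ℝ)
      * (((m - 1 + 1) ^ n : ℕ) : ℝ), by positivity, ?_⟩
  intro E K hK
  constructor
  · -- IsShapeField
    refine ⟨?_, fun x hx M hM P hP j => hP.1 j,
      fun x hx M' M hM' hle P hP => ⟨hP.1, fun α hα j => (hP.2.1 α hα j).trans hle, hP.2.2⟩⟩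
    intro x hx M hM P hP P' hP' a b ha hb hab
    refine ⟨?_, ?_, ?_⟩
    · intro j
      show (a • P j + b • P' j).totalDegree ≤ m - 1
      refine le_trans (totalDegree_add _ _) (max_le ?_ ?_)
      · exact le_trans (totalDegree_smul_le _ _) (hP.1 j)
      · exact le_trans (totalDegree_smul_le _ _) (hP'.1 j)
    · intro α hα j
      show |polyPDval α (a • P j + b • P' j) x| ≤ M
      rw [sf_polyPDval_add, sf_polyPDval_smul, sf_polyPDval_smul]
      calc |a * polyPDval α (P j) x + b * polyPDval α (P' j) x|
          ≤ |a * polyPDval α (P j) x| + |b * polyPDval α (P' j) x| := abs_add_le _ _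
        _ = a * |polyPDval α (P j) x| + b * |polyPDval α (P' j) x| := by
            rw [abs_mul, abs_mul, abs_of_nonneg ha, abs_of_nonneg hb]
        _ ≤ a * M + b * M := add_le_add
            (mul_le_mul_of_nonneg_left (hP.2.1 α hα j) ha)
            (mul_le_mul_of_nonneg_left (hP'.2.1 α hα j) hb)
        _ = M := by rw [← add_mul, hab, one_mul]
    · have hgoal : (fun j => eval (fun i => x i) ((a • P + b • P') j))
          = a • (fun j => eval (fun i => x i) (P j)) + b • (fun j => eval (fun i => x i) (P' j)) := by
        funext j
        show eval (fun i => x i) (a • P j + b • P' j) = _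
        rw [map_add, smul_eq_C_mul, smul_eq_C_mul, map_mul, map_mul, eval_C, eval_C]
        rfl
      rw [hgoal]
      exact hK x hx hP.2.2 hP'.2.2 ha hb hab
  · -- SFConvex
    intro δ hδ hδ1 x hx M hM P₁ P₂ hP₁ hP₂ Q₁ Q₂ hQ₁d hQ₂d hdiff hQbnd hpart
    have hQc : ∀ σ : Fin n →₀ ℕ, (∑ i, σ i) ≤ m - 1 →
        |coeff σ (sfPhi (fun i => x i) Q₁)| ≤ (δ ^ (∑ i, σ i))⁻¹ ∧
        |coeff σ (sfPhi (fun i => x i) Q₂)| ≤ (δ ^ (∑ i, σ i))⁻¹ := by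
      intro σ hσ
      have h := hQbnd (fun i => σ i) hσ
      rw [zpow_neg, zpow_natCast] at h
      exact ⟨sf_coeff_bound_of_pdval x Q₁ σ _ h.1, sf_coeff_bound_of_pdval x Q₂ σ _ h.2⟩
    have hRc : ∀ j, ∀ ν : Fin n →₀ ℕ, (∑ i, ν i) ≤ m - 1 →
        |coeff ν (sfPhi (fun i => x i) (P₂ j - P₁ j))| ≤ M * δ ^ (m - 1 + 1 - ∑ i, ν i) := by
      intro j ν hν
      refine sf_coeff_bound_of_pdval x _ ν _ ?_
      rw [sf_polyPDval_sub, abs_sub_comm, ← sf_polyPDval_sub]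
      exact hdiff (fun i => ν i) hν j
    have hθ₂B : ∀ μ : Fin n →₀ ℕ, (∑ i, μ i) ≤ m - 1 →
        |coeff μ (sfPhi (fun i => x i) (odot (m - 1) x Q₂ Q₂))|
          ≤ (((m - 1 + 1) ^ n : ℕ) : ℝ) * (δ ^ (∑ i, μ i))⁻¹ :=
      fun μ hμ => sf_coeff_theta_bound (m - 1) x Q₂ δ hδ (fun σ hσ => (hQc σ hσ).2) μ hμ
    refine ⟨?_, ?_, ?_⟩
    · intro j
      show (odot (m - 1) x (odot (m - 1) x Q₁ Q₁) (P₁ j)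
          + odot (m - 1) x (odot (m - 1) x Q₂ Q₂) (P₂ j)).totalDegree ≤ m - 1
      exact le_trans (totalDegree_add _ _)
        (max_le (sf_taylorTrunc_totalDegree_le _ _ _) (sf_taylorTrunc_totalDegree_le _ _ _))
    · intro α hα j
      show |polyPDval α (odot (m - 1) x (odot (m - 1) x Q₁ Q₁) (P₁ j)
          + odot (m - 1) x (odot (m - 1) x Q₂ Q₂) (P₂ j)) x| ≤ _
      set αF : Fin n →₀ ℕ := Finsupp.equivFunOnFinite.symm α with hαF
      have hαsum : (∑ i, αF i) = ∑ i, α i := Finset.sum_congr rfl fun i _ => rfl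
      have hαk : (∑ i, αF i) ≤ m - 1 := by rw [hαsum]; exact hα
      have hA : sfPhi (fun i => x i) (odot (m - 1) x Q₁ Q₁)
          = 1 - sfPhi (fun i => x i) (odot (m - 1) x Q₂ Q₂) := by
        have h1 : sfPhi (fun i => x i) (odot (m - 1) x Q₁ Q₁)
            + sfPhi (fun i => x i) (odot (m - 1) x Q₂ Q₂) = 1 := by
          rw [← map_add, hpart, map_one]
        linear_combination h1
      have hcoeffS : coeff αF (sfPhi (fun i => x i)
            (odot (m - 1) x (odot (m - 1) x Q₁ Q₁) (P₁ j)
              + odot (m - 1) x (odot (m - 1) x Q₂ Q₂) (P₂ j)))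
          = coeff αF (sfPhi (fun i => x i) (P₁ j))
            + coeff αF (sfPhi (fun i => x i) (odot (m - 1) x Q₂ Q₂)
                * sfPhi (fun i => x i) (P₂ j - P₁ j)) := by
        rw [map_add, coeff_add, sf_coeff_phi_odot (m - 1) x _ (P₁ j) αF hαk,
          sf_coeff_phi_odot (m - 1) x _ (P₂ j) αF hαk, hA, ← coeff_add, ← coeff_add]
        congr 1
        rw [map_sub]
        ring
      have hFpos := sf_fact_prod_pos α
      have hest := sf_est (m - 1) x M δ hδ hδ1 hM.le (odot (m - 1) x Q₂ Q₂) (P₂ j - P₁ j)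
        hθ₂B (hRc j) αF hαk
      have hFle : ∏ i, ((α i).factorial : ℝ) ≤ (((m - 1).factorial : ℕ) : ℝ) ^ n :=
        sf_fact_prod_le α (m - 1) fun i => (sf_fun_apply_le_sum α i).trans hα
      calc |polyPDval α (odot (m - 1) x (odot (m - 1) x Q₁ Q₁) (P₁ j)
              + odot (m - 1) x (odot (m - 1) x Q₂ Q₂) (P₂ j)) x|
          = (∏ i, ((α i).factorial : ℝ)) * |coeff αF (sfPhi (fun i => x i)
              (odot (m - 1) x (odot (m - 1) x Q₁ Q₁) (P₁ j)
                + odot (m - 1) x (odot (m - 1) x Q₂ Q₂) (P₂ j)))| := by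
            rw [sf_polyPDval_coeff, abs_mul, abs_of_pos hFpos]
        _ ≤ (∏ i, ((α i).factorial : ℝ)) * (|coeff αF (sfPhi (fun i => x i) (P₁ j))|
              + |coeff αF (sfPhi (fun i => x i) (odot (m - 1) x Q₂ Q₂)
                  * sfPhi (fun i => x i) (P₂ j - P₁ j))|) := by
            refine mul_le_mul_of_nonneg_left ?_ hFpos.le
            rw [hcoeffS]
            exact abs_add_le _ _
        _ = (∏ i, ((α i).factorial : ℝ)) * |coeff αF (sfPhi (fun i => x i) (P₁ j))|
              + (∏ i, ((α i).factorial : ℝ)) * |coeff αF (sfPhi (fun i => x i)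
                  (odot (m - 1) x Q₂ Q₂) * sfPhi (fun i => x i) (P₂ j - P₁ j))| := by ring
        _ ≤ M + (((m - 1).factorial : ℕ) : ℝ) ^ n
              * ((((m - 1 + 1) ^ n : ℕ) : ℝ) * (((m - 1 + 1) ^ n : ℕ) : ℝ) * M) := by
            refine add_le_add ?_ ?_
            · rw [← abs_of_pos hFpos, ← abs_mul, ← sf_polyPDval_coeff]
              exact hP₁.2.1 α hα j
            · exact mul_le_mul hFle hest (abs_nonneg _) (by positivity)
        _ ≤ (1 + (((m - 1).factorial : ℕ) : ℝ) ^ n * (((m - 1 + 1) ^ n : ℕ) : ℝ)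
              * (((m - 1 + 1) ^ n : ℕ) : ℝ)) * M := by nlinarith [hM.le]
    · have hgoal : (fun j => eval (fun i => x i)
            (odot (m - 1) x (odot (m - 1) x Q₁ Q₁) (P₁ j)
              + odot (m - 1) x (odot (m - 1) x Q₂ Q₂) (P₂ j)))
          = (eval (fun i => x i) (odot (m - 1) x Q₁ Q₁))
              • (fun j => eval (fun i => x i) (P₁ j))
            + (eval (fun i => x i) (odot (m - 1) x Q₂ Q₂))
              • (fun j => eval (fun i => x i) (P₂ j)) := by
        funext j
        show eval (fun i => x i) (odot (m - 1) x (odot (m - 1) x Q₁ Q₁) (P₁ j)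
            + odot (m - 1) x (odot (m - 1) x Q₂ Q₂) (P₂ j)) = _
        simp only [map_add, sf_eval_odot, Pi.add_apply, Pi.smul_apply, smul_eq_mul]
      have hsum : eval (fun i => x i) (odot (m - 1) x Q₁ Q₁)
          + eval (fun i => x i) (odot (m - 1) x Q₂ Q₂) = 1 := by
        rw [← map_add, hpart, map_one]
      have hnn1 : 0 ≤ eval (fun i => x i) (odot (m - 1) x Q₁ Q₁) := by
        rw [sf_eval_odot]; exact mul_self_nonneg _
      have hnn2 : 0 ≤ eval (fun i => x i) (odot (m - 1) x Q₂ Q₂) := by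
        rw [sf_eval_odot]; exact mul_self_nonneg _
      rw [hgoal]
      exact hK x hx hP₁.2.2 hP₂.2.2 hnn1 hnn2 hsum

end
end

section
/- Let V be a finite-dimensional real normed vector space and let K ⊆ V be a nonempty bounded convex set. Then for every δ > 0 there exist finitely many continuous linear functionals ξ_1,…,ξ_N ∈ V* and real numbers c_1,…,c_N such that the convex polytope K_δ := { v ∈ V : ξ_i(v) ≤ c_i for all 1 ≤ i ≤ N } satisfies K ⊆ K_δ ⊆ B_δ(K), where B_δ(K) := { v ∈ V : there exists w ∈ K with ‖v − w‖ < δ } is the open δ-neighborhood of K. -/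
/-- **Polytope approximation of convex sets** (Lemma 4.1): every nonempty bounded convex
set `K` in a finite-dimensional real normed space is contained in a convex polytope
`K_δ = {v : ξᵢ v ≤ cᵢ, 1 ≤ i ≤ N}` which lies inside the open `δ`-neighborhood of `K`. -/
theorem polytope_approximation_of_convex
    (V : Type*) [NormedAddCommGroup V] [NormedSpace ℝ V] [FiniteDimensional ℝ V]
    (K : Set V) (hne : K.Nonempty) (hconv : Convex ℝ K) (hbdd : Bornology.IsBounded K)
    (δ : ℝ) (hδ : 0 < δ) :
    ∃ (N : ℕ) (ξ : Fin N → (V →L[ℝ] ℝ)) (c : Fin N → ℝ),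
      K ⊆ {v : V | ∀ i, ξ i v ≤ c i} ∧
      {v : V | ∀ i, ξ i v ≤ c i} ⊆ {v : V | ∃ w ∈ K, ‖v - w‖ < δ} := by
  classical
  set A : Set V := closure K with hA
  have hAconv : Convex ℝ A := hconv.closure
  have hAclosed : IsClosed A := isClosed_closure
  have hAne : A.Nonempty := hne.closure
  have hAbdd : Bornology.IsBounded A := hbdd.closure
  -- the shell
  set S : Set V := {x | Metric.infDist x A = δ / 2} with hS
  have hScl : IsClosed S := isClosed_eq (Metric.continuous_infDist_pt A) continuous_const
  have hSbdd : Bornology.IsBounded S := by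
    have : S ⊆ Metric.thickening δ A := by
      intro x hx
      rw [Metric.mem_thickening_iff_infDist_lt hAne]
      simp only [hS, Set.mem_setOf_eq] at hx
      linarith
    exact (hAbdd.thickening).subset this
  have hScomp : IsCompact S := Metric.isCompact_of_isClosed_isBounded hScl hSbdd
  -- separation for each point of S
  have hsep : ∀ x : S, ∃ p : (V →L[ℝ] ℝ) × ℝ,
      (∀ a ∈ A, p.1 a < p.2) ∧ p.2 < p.1 x := by
    intro ⟨x, hx⟩
    have hxA : x ∉ A := by
      intro hxA
      have : Metric.infDist x A = 0 := by
        rw [Metric.infDist_zero_of_mem hxA]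
      simp only [hS, Set.mem_setOf_eq] at hx
      rw [this] at hx
      linarith
    obtain ⟨f, c, hfc, hcx⟩ := geometric_hahn_banach_closed_point hAconv hAclosed hxA
    exact ⟨(f, c), hfc, hcx⟩
  choose P hP1 hP2 using hsep
  -- open cover of S
  have hcover : S ⊆ ⋃ x : S, {y : V | (P x).2 < (P x).1 y} := by
    intro x hx
    exact Set.mem_iUnion.2 ⟨⟨x, hx⟩, hP2 ⟨x, hx⟩⟩
  obtain ⟨t, ht⟩ := hScomp.elim_finite_subcover _
    (fun x : S => (isOpen_lt continuous_const (P x).1.continuous)) hcover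
  -- indexing by Fin
  let e := t.equivFin
  refine ⟨t.card, fun i => (P (e.symm i)).1, fun i => (P (e.symm i)).2, ?_, ?_⟩
  · intro v hv i
    exact le_of_lt (hP1 (e.symm i) v (subset_closure hv))
  · intro v hv
    simp only [Set.mem_setOf_eq] at hv ⊢
    -- first show infDist v A < δ/2
    have key : Metric.infDist v A < δ / 2 := by
      by_contra h
      push_neg at h
      obtain ⟨a, ha⟩ := hAne
      -- segment from a to v
      set g : ℝ → V := fun s => a + s • (v - a) with hg
      have hgc : Continuous g := by continuity
      have hcont : ContinuousOn (fun s => Metric.infDist (g s) A) (Set.Icc 0 1) :=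
        ((Metric.continuous_infDist_pt A).comp hgc).continuousOn
      have h0 : Metric.infDist (g 0) A = 0 := by
        simp [hg, Metric.infDist_zero_of_mem ha]
      have h1 : δ / 2 ≤ Metric.infDist (g 1) A := by
        simpa [hg] using h
      have hiv := intermediate_value_Icc (by norm_num : (0:ℝ) ≤ 1) hcont
      have : δ / 2 ∈ Set.Icc (Metric.infDist (g 0) A) (Metric.infDist (g 1) A) := by
        rw [h0]; exact ⟨by positivity, h1⟩
      obtain ⟨s, hs01, hsval⟩ := hiv this
      have hgsS : g s ∈ S := hsval
      obtain ⟨x, hxt, hxmem⟩ := Set.mem_iUnion₂.1 (ht hgsS)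
      have hlt : (P x).2 < (P x).1 (g s) := hxmem
      -- but (P x).1 (g s) ≤ (P x).2
      have hva : (P x).1 (g s) = (1 - s) * (P x).1 a + s * (P x).1 v := by
        simp only [hg, map_add, map_smul, map_sub, smul_eq_mul]
        ring
      have hfa : (P x).1 a ≤ (P x).2 := le_of_lt (hP1 x a ha)
      have hfv : (P x).1 v ≤ (P x).2 := by
        have := hv (e ⟨x, hxt⟩)
        simpa using this
      have hs0 : (0:ℝ) ≤ s := hs01.1
      have hs1 : s ≤ 1 := hs01.2
      nlinarith [hlt, hva, hfa, hfv]
    -- now extract a point of K within δ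
    obtain ⟨w, hwA, hwd⟩ := (Metric.infDist_lt_iff hAne).1 key
    obtain ⟨w', hw'K, hw'd⟩ := Metric.mem_closure_iff.1 hwA (δ / 2) (by positivity)
    refine ⟨w', hw'K, ?_⟩
    have : ‖v - w'‖ ≤ ‖v - w‖ + ‖w - w'‖ := norm_sub_le_norm_sub_add_norm_sub v w w'
    rw [← dist_eq_norm] at *
    calc dist v w' ≤ dist v w + dist w w' := dist_triangle v w w'
      _ < δ / 2 + δ / 2 := add_lt_add hwd hw'd
      _ = δ := by ring
end

section
/- Let V be a finite-dimensional real vector space with dual V*, let q be a positive integer, let L : V* → ℝ^q be a linear map, and let L* : ℝ^q → V be its dual operator, characterized by x · L(φ) = φ(L*(x)) for all x ∈ ℝ^q and φ ∈ V*. Let b ∈ ℝ^q and v ∈ V. Suppose there exists φ_0 ∈ V* with L(φ_0) ≤ b (componentwise). Then sup { φ(v) : φ ∈ V*, L(φ) ≤ b componentwise } = inf { b · y : y ∈ ℝ^q, y ≥ 0 componentwise, L*(y) = v }, where both sides are interpreted in the extended reals (in particular, the supremum is +∞ if and only if the infimum is over the empty set). -/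
open scoped BigOperators

open Finset in
/-- A finitely generated cone is closed (version with support restricted to a finset). -/
lemma cone_isClosed_aux {E : Type*} [NormedAddCommGroup E] [NormedSpace ℝ E]
    [FiniteDimensional ℝ E] {ι : Type*} [Fintype ι] [DecidableEq ι] (A : ι → E)
    (s : Finset ι) :
    IsClosed {x : E | ∃ y : ι → ℝ, (∀ i, 0 ≤ y i) ∧ (∀ i ∉ s, y i = 0) ∧
      ∑ i, y i • A i = x} := by
  induction s using Finset.strongInduction with
  | _ s ih =>
  by_cases hind : LinearIndependent ℝ (fun i : ↑s => A i)
  · -- linearly independent case: image of the closed orthant under a closed embedding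
    set f : (↑s → ℝ) →ₗ[ℝ] E := ∑ i : ↑s, (LinearMap.proj i).smulRight (A i) with hf
    have hfapp : ∀ z : ↑s → ℝ, f z = ∑ i : ↑s, z i • A i := by
      intro z; simp [hf]
    have hker : LinearMap.ker f = ⊥ := by
      rw [LinearMap.ker_eq_bot']
      intro z hz
      rw [hfapp] at hz
      funext i
      exact Fintype.linearIndependent_iff.mp hind z hz i
    have hemb := LinearMap.isClosedEmbedding_of_injective (f := f) hker
    have horth : IsClosed {z : ↑s → ℝ | ∀ i, 0 ≤ z i} := by
      have : {z : ↑s → ℝ | ∀ i, 0 ≤ z i} = ⋂ i, {z : ↑s → ℝ | 0 ≤ z i} := by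
        ext z; simp
      rw [this]
      exact isClosed_iInter fun i => isClosed_le continuous_const (continuous_apply i)
    have hset : {x : E | ∃ y : ι → ℝ, (∀ i, 0 ≤ y i) ∧ (∀ i ∉ s, y i = 0) ∧
        ∑ i, y i • A i = x} = f '' {z : ↑s → ℝ | ∀ i, 0 ≤ z i} := by
      ext x
      constructor
      · rintro ⟨y, hy0, hysupp, hysum⟩
        refine ⟨fun i => y i, fun i => hy0 i, ?_⟩
        rw [hfapp, Finset.sum_coe_sort s (fun i => y i • A i), ← hysum]
        exact Finset.sum_subset (Finset.subset_univ s)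
          (fun i _ hi => by rw [hysupp i hi, zero_smul])
      · rintro ⟨z, hz, hzx⟩
        refine ⟨fun i => if h : i ∈ s then z ⟨i, h⟩ else 0, ?_, ?_, ?_⟩
        · intro i
          by_cases h : i ∈ s
          · simpa [h] using hz ⟨i, h⟩
          · simp [h]
        · intro i hi; simp [hi]
        · rw [← hzx, hfapp]
          rw [← Finset.sum_subset (Finset.subset_univ s)
            (f := fun i => (if h : i ∈ s then z ⟨i, h⟩ else 0) • A i)
            (fun i _ hi => by simp [hi])]
          rw [← Finset.sum_coe_sort s
            (fun i => (if h : i ∈ s then z ⟨i, h⟩ else 0) • A i)]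
          exact Finset.sum_congr rfl fun i _ => by simp [i.2]
    rw [hset]
    exact hemb.isClosedMap _ horth
  · -- dependent case: reduce to smaller support sets
    obtain ⟨g, hgsum, j₀, hgj₀⟩ := Fintype.not_linearIndependent_iff.mp hind
    obtain ⟨d, hdsum, j, hdj⟩ : ∃ d : ↑s → ℝ, ∑ i : ↑s, d i • A i = 0 ∧ ∃ j, 0 < d j := by
      rcases lt_or_gt_of_ne hgj₀ with h | h
      · exact ⟨-g, by simpa using hgsum, j₀, by simpa using h⟩
      · exact ⟨g, hgsum, j₀, h⟩
    set d' : ι → ℝ := fun i => if h : i ∈ s then d ⟨i, h⟩ else 0 with hd'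
    have hd'sum : ∑ i, d' i • A i = 0 := by
      rw [← Finset.sum_subset (Finset.subset_univ s)
        (f := fun i => d' i • A i) (fun i _ hi => by simp [hd', hi]),
        ← Finset.sum_coe_sort s (fun i => d' i • A i), ← hdsum]
      exact Finset.sum_congr rfl fun i _ => by simp [hd', i.2]
    set F := s.filter (fun i => 0 < d' i) with hF
    have hFne : F.Nonempty := ⟨j, Finset.mem_filter.mpr ⟨j.2, by simpa [hd', j.2] using hdj⟩⟩
    have hFs : ∀ i ∈ F, i ∈ s := fun i hi => (Finset.mem_filter.mp hi).1
    have key : {x : E | ∃ y : ι → ℝ, (∀ i, 0 ≤ y i) ∧ (∀ i ∉ s, y i = 0) ∧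
        ∑ i, y i • A i = x} = ⋃ i ∈ F, {x : E | ∃ y : ι → ℝ, (∀ i, 0 ≤ y i) ∧
          (∀ j ∉ s.erase i, y j = 0) ∧ ∑ i, y i • A i = x} := by
      ext x
      constructor
      · rintro ⟨y, hy0, hysupp, hysum⟩
        obtain ⟨i₀, hi₀F, hmin⟩ := F.exists_min_image (fun i => y i / d' i) hFne
        have hd'i₀ : 0 < d' i₀ := (Finset.mem_filter.mp hi₀F).2
        set t := y i₀ / d' i₀ with htdef
        have ht : 0 ≤ t := div_nonneg (hy0 i₀) hd'i₀.le
        refine Set.mem_iUnion₂.mpr ⟨i₀, hi₀F, fun i => y i - t * d' i, ?_, ?_, ?_⟩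
        · intro i
          show 0 ≤ y i - t * d' i
          by_cases hpos : 0 < d' i
          · have hiF : i ∈ F := Finset.mem_filter.mpr
              ⟨by by_contra hns; simp [hd', hns] at hpos, hpos⟩
            have := hmin i hiF
            rw [sub_nonneg]
            calc t * d' i ≤ (y i / d' i) * d' i := by
                  exact mul_le_mul_of_nonneg_right this hpos.le
              _ = y i := div_mul_cancel₀ _ hpos.ne'
          · push_neg at hpos
            have : t * d' i ≤ 0 := mul_nonpos_of_nonneg_of_nonpos ht hpos
            linarith [hy0 i]
        · intro i hi
          show y i - t * d' i = 0
          by_cases hii : i = i₀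
          · subst hii
            simp [htdef, div_mul_cancel₀ _ hd'i₀.ne']
          · have hns : i ∉ s := by
              intro hins
              exact hi (Finset.mem_erase.mpr ⟨hii, hins⟩)
            simp [hysupp i hns, hd', hns]
        · have : ∀ i, (y i - t * d' i) • A i = y i • A i - t • (d' i • A i) := by
            intro i; rw [sub_smul, mul_smul]
          simp_rw [this]
          rw [Finset.sum_sub_distrib, ← Finset.smul_sum, hd'sum, smul_zero, sub_zero, hysum]
      · intro hx
        obtain ⟨i₀, hi₀F, y, hy0, hysupp, hysum⟩ := Set.mem_iUnion₂.mp hx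
        exact ⟨y, hy0, fun i hi => hysupp i (fun hmem => hi (Finset.mem_of_mem_erase hmem)),
          hysum⟩
    rw [key]
    exact isClosed_biUnion_finset fun i hi => ih (s.erase i) (Finset.erase_ssubset (hFs i hi))

open scoped InnerProductSpace in
/-- Farkas' lemma for finitely generated cones in a finite-dimensional inner product space. -/
lemma farkas_alternative {E : Type*} [NormedAddCommGroup E] [InnerProductSpace ℝ E]
    [FiniteDimensional ℝ E] {ι : Type*} [Fintype ι] [DecidableEq ι] (A : ι → E) (c : E)
    (h : ¬ ∃ y : ι → ℝ, (∀ i, 0 ≤ y i) ∧ ∑ i, y i • A i = c) :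
    ∃ ψ : E, (∀ i, 0 ≤ ⟪A i, ψ⟫_ℝ) ∧ ⟪c, ψ⟫_ℝ < 0 := by
  set C : Set E := {x : E | ∃ y : ι → ℝ, (∀ i, 0 ≤ y i) ∧ ∑ i, y i • A i = x} with hC
  have hCclosed : IsClosed C := by
    have := cone_isClosed_aux A (Finset.univ)
    convert this using 2 with x
    simp [hC]
  set K : ConvexCone ℝ E :=
    { carrier := C
      smul_mem' := by
        rintro t ht x ⟨y, hy0, hysum⟩
        exact ⟨t • y, fun i => mul_nonneg ht.le (hy0 i), by
          simp_rw [Pi.smul_apply, smul_eq_mul, mul_smul, ← Finset.smul_sum, hysum]⟩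
      add_mem' := by
        rintro x ⟨y₁, hy₁, hs₁⟩ z ⟨y₂, hy₂, hs₂⟩
        exact ⟨y₁ + y₂, fun i => add_nonneg (hy₁ i) (hy₂ i), by
          simp_rw [Pi.add_apply, add_smul, Finset.sum_add_distrib, hs₁, hs₂]⟩ } with hK
  have hne : (K : Set E).Nonempty := ⟨0, 0, fun _ => le_refl _, by simp⟩
  have hcK : c ∉ K := fun hc => h hc
  obtain ⟨ψ, hψK, hψc⟩ :=
    ProperCone.hyperplane_separation' (x₀ := c)
      ({ toSubmodule :=
          { carrier := C
            add_mem' := fun hx hz => K.add_mem' hx hz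
            zero_mem' := ⟨0, fun _ => le_refl _, by simp⟩
            smul_mem' := by
              rintro t x ⟨y, hy0, hysum⟩
              exact ⟨(t : ℝ) • y, fun i => mul_nonneg t.2 (hy0 i), by
                show _ = (t : ℝ) • x
                rw [← hysum, Finset.smul_sum]
                simp_rw [Pi.smul_apply, smul_eq_mul, mul_smul]⟩ }
         isClosed' := hCclosed } : ProperCone ℝ E) (fun hc => h hc)
  refine ⟨ψ, fun i => ?_, hψc⟩
  refine hψK (A i) ⟨Pi.single i 1, ?_, ?_⟩
  · intro j
    by_cases hj : j = i <;> simp [Pi.single_apply, hj]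
  · simp [Pi.single_apply, ite_smul]

open scoped InnerProductSpace in
/-- Gale's theorem of the alternative: an infeasible finite system of linear inequalities
over a finite-dimensional space admits a nonnegative certificate of infeasibility. -/
lemma gale_alternative {W : Type*} [AddCommGroup W] [Module ℝ W] [FiniteDimensional ℝ W]
    {m : ℕ} (M : W →ₗ[ℝ] (Fin m → ℝ)) (d : Fin m → ℝ)
    (h : ¬ ∃ w : W, ∀ k, M w k ≤ d k) :
    ∃ u : Fin m → ℝ, (∀ k, 0 ≤ u k) ∧ (∀ w : W, ∑ k, u k * M w k = 0) ∧
      ∑ k, u k * d k < 0 := by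
  classical
  set n := Module.finrank ℝ W with hn
  set B := Module.finBasis ℝ W with hB
  set E := EuclideanSpace ℝ (Fin m) with hE
  set el : E ≃ₗ[ℝ] (Fin m → ℝ) := WithLp.linearEquiv 2 ℝ (Fin m → ℝ) with hel
  -- generators (in plain function form)
  set g : (Fin n ⊕ Fin n) ⊕ Fin m → (Fin m → ℝ) :=
    Sum.elim (Sum.elim (fun j => M (B j)) (fun j => -M (B j))) (fun k => Pi.single k 1) with hg
  set A : (Fin n ⊕ Fin n) ⊕ Fin m → E := fun i => el.symm (g i) with hA
  have hnotin : ¬ ∃ y : ((Fin n ⊕ Fin n) ⊕ Fin m) → ℝ, (∀ i, 0 ≤ y i) ∧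
      ∑ i, y i • A i = el.symm d := by
    rintro ⟨y, hy0, hysum⟩
    apply h
    set w : W := ∑ j, (y (Sum.inl (Sum.inl j)) - y (Sum.inl (Sum.inr j))) • B j with hw
    have hsum' : ∑ i, y i • g i = d := by
      have := congrArg el hysum
      rw [map_sum] at this
      simpa [hA] using this
    have hMw : ∀ k, M w k + ∑ i, y (Sum.inr i) * Pi.single (M := fun _ => ℝ) i 1 k = d k := by
      intro k
      have := congrFun hsum' k
      rw [Fintype.sum_sum_type, Fintype.sum_sum_type] at this
      simp only [hg, Sum.elim_inl, Sum.elim_inr] at this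
      rw [hw]
      rw [map_sum]
      simp only [map_smul]
      rw [← this]
      simp only [sub_smul, Finset.sum_apply, Pi.add_apply, Pi.sub_apply, Pi.smul_apply,
        Pi.neg_apply, smul_eq_mul, Finset.sum_sub_distrib, mul_neg, Finset.sum_neg_distrib]
      ring
    refine ⟨w, fun k => ?_⟩
    have := hMw k
    have hpos : 0 ≤ ∑ i, y (Sum.inr i) * Pi.single (M := fun _ => ℝ) i 1 k :=
      Finset.sum_nonneg fun i _ => mul_nonneg (hy0 _) (by
        by_cases hik : i = k <;> simp [Pi.single_apply, hik])
    linarith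
  obtain ⟨ψ, hψA, hψc⟩ := farkas_alternative A (el.symm d) hnotin
  -- coordinates of ψ
  set u : Fin m → ℝ := fun k => el ψ k with hu
  have hinner : ∀ x : Fin m → ℝ, ⟪el.symm x, ψ⟫_ℝ = ∑ k, x k * u k := by
    intro x
    rw [PiLp.inner_apply]
    apply Finset.sum_congr rfl
    intro k _
    rw [Real.inner_apply]
    rfl
  have hu0 : ∀ k, 0 ≤ u k := by
    intro k
    have := hψA (Sum.inr k)
    rw [hA, hg] at this
    simp only [Sum.elim_inr] at this
    rw [hinner] at this
    simpa [Pi.single_apply, Finset.sum_ite_eq'] using this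
  have hbasis : ∀ j, ∑ k, M (B j) k * u k = 0 := by
    intro j
    have h1 := hψA (Sum.inl (Sum.inl j))
    have h2 := hψA (Sum.inl (Sum.inr j))
    rw [hA, hg] at h1 h2
    simp only [Sum.elim_inl, Sum.elim_inr] at h1 h2
    rw [hinner] at h1
    rw [show ((-M (B j) : Fin m → ℝ)) = -(M (B j)) from rfl, map_neg, inner_neg_left,
      hinner] at h2
    linarith
  have hall : ∀ w : W, ∑ k, u k * M w k = 0 := by
    have hzero : (∑ k, u k • ((LinearMap.proj k).comp M) : W →ₗ[ℝ] ℝ) = 0 := by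
      apply B.ext
      intro j
      simp only [LinearMap.sum_apply, LinearMap.smul_apply, LinearMap.coe_comp,
        Function.comp_apply, LinearMap.proj_apply, LinearMap.zero_apply, smul_eq_mul]
      rw [← hbasis j]
      exact Finset.sum_congr rfl fun k _ => mul_comm _ _
    intro w
    have := congrArg (fun f : W →ₗ[ℝ] ℝ => f w) hzero
    simpa using this
  refine ⟨u, hu0, hall, ?_⟩
  rw [hinner] at hψc
  calc ∑ k, u k * d k = ∑ k, d k * u k := Finset.sum_congr rfl fun k _ => mul_comm _ _
    _ < 0 := hψc

set_option maxHeartbeats 1000000 in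
/-- **LP duality in a finite-dimensional vector space** (Lemma A.2): if the primal
problem `L φ ≤ b` is feasible, then `sup {φ(v) : L φ ≤ b}` equals
`inf {b·y : y ≥ 0, L* y = v}`, as extended reals. -/
theorem lp_duality_finite_dimensional
    (V : Type*) [AddCommGroup V] [Module ℝ V] [FiniteDimensional ℝ V]
    (q : ℕ) (hq : 0 < q)
    (L : Module.Dual ℝ V →ₗ[ℝ] (Fin q → ℝ)) (Lstar : (Fin q → ℝ) →ₗ[ℝ] V)
    (hdual : ∀ (x : Fin q → ℝ) (φ : Module.Dual ℝ V), ∑ i, x i * L φ i = φ (Lstar x))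
    (b : Fin q → ℝ) (v : V)
    (hfeas : ∃ φ₀ : Module.Dual ℝ V, ∀ i, L φ₀ i ≤ b i) :
    sSup {r : EReal | ∃ φ : Module.Dual ℝ V, (∀ i, L φ i ≤ b i) ∧ r = ((φ v : ℝ) : EReal)}
      = sInf {r : EReal | ∃ y : Fin q → ℝ, (∀ i, 0 ≤ y i) ∧ Lstar y = v ∧
          r = ((∑ i, b i * y i : ℝ) : EReal)} := by
  classical
  obtain ⟨φ₀, hφ₀⟩ := hfeas
  -- weak duality
  apply le_antisymm
  · apply sSup_le
    rintro r ⟨φ, hφ, rfl⟩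
    apply le_sInf
    rintro r' ⟨y, hy0, hyv, rfl⟩
    rw [EReal.coe_le_coe_iff]
    calc φ v = φ (Lstar y) := by rw [hyv]
      _ = ∑ i, y i * L φ i := (hdual y φ).symm
      _ ≤ ∑ i, y i * b i :=
          Finset.sum_le_sum fun i _ => mul_le_mul_of_nonneg_left (hφ i) (hy0 i)
      _ = ∑ i, b i * y i := Finset.sum_congr rfl fun i _ => mul_comm _ _
  · -- strong duality
    by_contra hlt
    push_neg at hlt
    have hbot : ((φ₀ v : ℝ) : EReal) ≤ sSup {r : EReal | ∃ φ : Module.Dual ℝ V,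
        (∀ i, L φ i ≤ b i) ∧ r = ((φ v : ℝ) : EReal)} :=
      le_sSup ⟨φ₀, hφ₀, rfl⟩
    obtain ⟨c, hc1, hc2⟩ := EReal.exists_between_coe_real hlt
    -- the combined system
    set M : Module.Dual ℝ V →ₗ[ℝ] (Fin (q + 1) → ℝ) :=
      LinearMap.pi (Fin.cons (-(Module.Dual.eval ℝ V v)) (fun i => (LinearMap.proj i).comp L))
      with hM
    have hM0 : ∀ φ, M φ 0 = -(φ v) := fun φ => rfl
    have hMs : ∀ φ i, M φ i.succ = L φ i := fun φ i => by
      simp [hM, LinearMap.pi_apply, Fin.cons_succ]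
    set d : Fin (q + 1) → ℝ := Fin.cons (-c) b with hd
    have hd0 : d 0 = -c := rfl
    have hds : ∀ i, d i.succ = b i := fun i => by simp [hd, Fin.cons_succ]
    by_cases hfs : ∃ φ : Module.Dual ℝ V, ∀ k, M φ k ≤ d k
    · obtain ⟨φ₁, hφ₁⟩ := hfs
      have hL1 : ∀ i, L φ₁ i ≤ b i := fun i => by
        have := hφ₁ i.succ; rwa [hMs, hds] at this
      have hv1 : c ≤ φ₁ v := by
        have := hφ₁ 0; rw [hM0, hd0] at this; linarith
      have : ((c : ℝ) : EReal) ≤ sSup {r : EReal | ∃ φ : Module.Dual ℝ V,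
          (∀ i, L φ i ≤ b i) ∧ r = ((φ v : ℝ) : EReal)} :=
        le_trans (by exact_mod_cast hv1) (le_sSup ⟨φ₁, hL1, rfl⟩)
      exact absurd (lt_of_le_of_lt this hc1) (lt_irrefl _)
    · obtain ⟨u, hu0, huM, hud⟩ := gale_alternative M d hfs
      set lam := u 0 with hlam
      set y : Fin q → ℝ := fun i => u i.succ with hy
      have hexp : ∀ φ : Module.Dual ℝ V, ∑ i, y i * L φ i = lam * φ v := by
        intro φ
        have := huM φ
        rw [Fin.sum_univ_succ] at this
        rw [hM0] at this
        have h2 : ∀ i : Fin q, u i.succ * M φ i.succ = y i * L φ i := fun i => by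
          rw [hMs]
        rw [Finset.sum_congr rfl (fun i _ => h2 i)] at this
        linarith
      have hLy : Lstar y = lam • v := by
        rw [← sub_eq_zero]
        rw [← Module.forall_dual_apply_eq_zero_iff ℝ]
        intro φ
        rw [map_sub, map_smul]
        have := hexp φ
        rw [hdual y φ] at this
        simp [this, smul_eq_mul]
      have hud' : lam * (-c) + ∑ i, y i * b i < 0 := by
        have := hud
        rw [Fin.sum_univ_succ, hd0] at this
        have h2 : ∀ i : Fin q, u i.succ * d i.succ = y i * b i := fun i => by rw [hds]
        rwa [Finset.sum_congr rfl (fun i _ => h2 i)] at this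
      rcases eq_or_lt_of_le (hu0 0) with hlam0 | hlampos
      · -- lam = 0 : contradiction with primal feasibility
        have hl : lam = 0 := hlam.trans hlam0.symm
        have hsum0 : ∑ i, y i * L φ₀ i = 0 := by
          rw [hexp φ₀, hl, zero_mul]
        have : (0 : ℝ) ≤ ∑ i, y i * b i := by
          rw [← hsum0]
          exact Finset.sum_le_sum fun i _ =>
            mul_le_mul_of_nonneg_left (hφ₀ i) (hu0 i.succ)
        rw [hl] at hud'
        simp at hud'
        linarith
      · -- lam > 0 : build a dual-feasible point with value < c
        have hlampos' : 0 < lam := hlam ▸ hlampos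
        set y' : Fin q → ℝ := fun i => lam⁻¹ * y i with hy'
        have hy'0 : ∀ i, 0 ≤ y' i := fun i =>
          mul_nonneg (inv_nonneg.mpr hlampos'.le) (hu0 i.succ)
        have hy'v : Lstar y' = v := by
          have : y' = lam⁻¹ • y := rfl
          rw [this, map_smul, hLy, smul_smul, inv_mul_cancel₀ hlampos'.ne', one_smul]
        have hval : ∑ i, b i * y' i < c := by
          have hsum : ∑ i, b i * y' i = lam⁻¹ * ∑ i, y i * b i := by
            rw [Finset.mul_sum]
            exact Finset.sum_congr rfl fun i _ => by rw [hy']; ring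
          rw [hsum]
          rw [inv_mul_lt_iff₀ hlampos']
          linarith
        have hmem : ((∑ i, b i * y' i : ℝ) : EReal) ∈ {r : EReal | ∃ y : Fin q → ℝ,
            (∀ i, 0 ≤ y i) ∧ Lstar y = v ∧ r = ((∑ i, b i * y i : ℝ) : EReal)} :=
          ⟨y', hy'0, hy'v, rfl⟩
        have : sInf {r : EReal | ∃ y : Fin q → ℝ, (∀ i, 0 ≤ y i) ∧ Lstar y = v ∧
            r = ((∑ i, b i * y i : ℝ) : EReal)} ≤ ((∑ i, b i * y' i : ℝ) : EReal) :=
          sInf_le hmem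
        have hlt2 : ((∑ i, b i * y' i : ℝ) : EReal) < ((c : ℝ) : EReal) := by
          exact_mod_cast hval
        exact absurd (lt_of_le_of_lt (le_trans this hlt2.le) hc2) (lt_irrefl _)
end

section
/- Let m ≥ 1, n ≥ 1, D ≥ 1 be integers. There exists a constant C depending only on m, n, D such that the following holds. Let S ⊆ ℝ^n be finite and let (P⃗^x)_{x∈S} be a Whitney field with values in 𝒫⃗ (D-tuples of degree-(m−1) polynomials on ℝ^n) satisfying ‖(P⃗^x)_{x∈S}‖_{Ẇ^m(S)} ≤ M_0. Write points of ℝ^{n+D} as (y, ξ) with y ∈ ℝ^n, ξ ∈ ℝ^D, set S⁺ := { (x,0) : x ∈ S }, and for each x ∈ S define the scalar polynomial P^{(x,0)}(y, ξ) := Σ_{j=1}^D ξ_j · P^x_j(y) on ℝ^{n+D}, which has degree ≤ m. Then the scalar Whitney field (P^{(x,0)})_{(x,0)∈S⁺} satisfies ‖(P^{(x,0)})_{(x,0)∈S⁺}‖_{Ẇ^{m+1}(S⁺)} ≤ C·M_0, i.e. for all distinct (x,0), (y,0) ∈ S⁺ and all multi-indices γ on ℝ^{n+D} with |γ| ≤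 m, |∂^γ(P^{(x,0)} − P^{(y,0)})(x,0)| ≤ C·M_0·|x − y|^{(m+1)−|γ|}. -/
open scoped BigOperators Classical

noncomputable section

namespace GTaux
open MvPolynomial

lemma finRange_split (n D : ℕ) : List.finRange (n + D) =
    ((List.finRange n).map (Fin.castAdd D)) ++ ((List.finRange D).map (Fin.natAdd n)) := by
  apply List.ext_getElem
  · simp
  · intro k h1 h2
    simp only [List.getElem_finRange, List.getElem_append, List.length_map, List.length_finRange,
      List.getElem_map]
    split <;> (apply Fin.ext; simp [Fin.castAdd, Fin.natAdd]; try omega)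

variable {n D : ℕ}

lemma castAdd_ne_natAdd (i : Fin n) (j : Fin D) : Fin.castAdd D i ≠ Fin.natAdd n j := by
  intro h
  have := congrArg Fin.val h
  simp [Fin.castAdd, Fin.natAdd] at this
  omega

lemma pderiv_rename_natAdd (j : Fin D) (p : MvPolynomial (Fin n) ℝ) :
    pderiv (Fin.natAdd n j) (rename (Fin.castAdd D) p) = 0 := by
  apply pderiv_eq_zero_of_notMem_vars
  intro h
  have := vars_rename (Fin.castAdd D) p h
  simp only [Finset.mem_image] at this
  obtain ⟨i, -, hi⟩ := this
  exact castAdd_ne_natAdd i j hi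

lemma pderiv_natAdd_mul (i j : Fin D) (p : MvPolynomial (Fin n) ℝ) :
    pderiv (Fin.natAdd n i) (X (Fin.natAdd n j) * rename (Fin.castAdd D) p)
      = if i = j then rename (Fin.castAdd D) p else 0 := by
  rw [pderiv_mul, pderiv_rename_natAdd, mul_zero, add_zero]
  by_cases h : i = j
  · subst h; simp
  · rw [pderiv_X_of_ne, zero_mul, if_neg h]
    simp [Fin.ext_iff, Fin.natAdd]
    omega

lemma pderiv_castAdd_rename (i : Fin n) (p : MvPolynomial (Fin n) ℝ) :
    pderiv (Fin.castAdd D i) (rename (Fin.castAdd D) p)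
      = rename (Fin.castAdd D) (pderiv i p) :=
  pderiv_rename (Fin.castAdd_injective n D) i p

lemma pderiv_castAdd_mul (i : Fin n) (j : Fin D) (p : MvPolynomial (Fin n) ℝ) :
    pderiv (Fin.castAdd D i) (X (Fin.natAdd n j) * rename (Fin.castAdd D) p)
      = X (Fin.natAdd n j) * rename (Fin.castAdd D) (pderiv i p) := by
  rw [pderiv_mul, pderiv_castAdd_rename, pderiv_X_of_ne (Ne.symm (castAdd_ne_natAdd i j)),
    zero_mul, zero_add]

lemma iter_pderiv_zero {N : ℕ} (k : Fin N) (t : ℕ) :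
    (fun r : MvPolynomial (Fin N) ℝ => pderiv k r)^[t] 0 = 0 :=
  Function.iterate_fixed (by simp) t

lemma iter_pderiv_sub {N : ℕ} (k : Fin N) (t : ℕ) (p q : MvPolynomial (Fin N) ℝ) :
    (fun r : MvPolynomial (Fin N) ℝ => pderiv k r)^[t] (p - q)
      = (fun r => pderiv k r)^[t] p - (fun r => pderiv k r)^[t] q := by
  induction t generalizing p q with
  | zero => simp
  | succ t ih => simp only [Function.iterate_succ_apply, map_sub, ih]

lemma iter_of_step_zero {N : ℕ} (k : Fin N) {t : ℕ} (ht : 1 ≤ t)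
    {q : MvPolynomial (Fin N) ℝ} (h : pderiv k q = 0) :
    (fun r : MvPolynomial (Fin N) ℝ => pderiv k r)^[t] q = 0 := by
  obtain ⟨s, rfl⟩ := Nat.exists_eq_add_of_le ht
  rw [add_comm, Function.iterate_succ_apply]
  simp only [h]
  exact iter_pderiv_zero k s

lemma iter_of_step2_zero {N : ℕ} (k : Fin N) {t : ℕ} (ht : 2 ≤ t)
    {q : MvPolynomial (Fin N) ℝ} (h : pderiv k (pderiv k q) = 0) :
    (fun r : MvPolynomial (Fin N) ℝ => pderiv k r)^[t] q = 0 := by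
  obtain ⟨s, rfl⟩ := Nat.exists_eq_add_of_le ht
  rw [add_comm, Function.iterate_add_apply]
  simp only [Function.iterate_succ_apply, Function.iterate_one, Function.iterate_zero_apply, h]
  exact iter_pderiv_zero k s

def stepD (γ : Fin D → ℕ) (i : Fin D) (q : MvPolynomial (Fin (n + D)) ℝ) :
    MvPolynomial (Fin (n + D)) ℝ :=
  (fun r => pderiv (Fin.natAdd n i) r)^[γ i] q

def stepN (β : Fin n → ℕ) (i : Fin n) (q : MvPolynomial (Fin (n + D)) ℝ) :
    MvPolynomial (Fin (n + D)) ℝ :=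
  (fun r => pderiv (Fin.castAdd D i) r)^[β i] q

lemma foldD_zero (L : List (Fin D)) (γ : Fin D → ℕ) :
    L.foldr (stepD γ) (0 : MvPolynomial (Fin (n + D)) ℝ) = 0 := by
  induction L with
  | nil => rfl
  | cons i L ih => simp only [List.foldr_cons, ih, stepD, iter_pderiv_zero]

lemma foldD_rename (L : List (Fin D)) (γ : Fin D → ℕ) (p : MvPolynomial (Fin n) ℝ) :
    L.foldr (stepD γ) (rename (Fin.castAdd D) p)
      = if ∀ i ∈ L, γ i = 0 then rename (Fin.castAdd D) p else 0 := by
  induction L with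
  | nil => simp
  | cons i L ih =>
    rw [List.foldr_cons, ih]
    by_cases hL : ∀ i' ∈ L, γ i' = 0
    · rw [if_pos hL]
      by_cases hi : γ i = 0
      · rw [stepD, hi, Function.iterate_zero_apply, if_pos]
        intro i' hi'
        rcases List.mem_cons.mp hi' with h | h
        · subst h; exact hi
        · exact hL i' h
      · rw [stepD, iter_of_step_zero _ (Nat.one_le_iff_ne_zero.mpr hi)
          (pderiv_rename_natAdd i p), if_neg]
        intro hcon
        exact hi (hcon i (List.mem_cons_self))
    · rw [if_neg hL, stepD, iter_pderiv_zero, if_neg]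
      intro hcon
      exact hL fun i' hi' => hcon i' (List.mem_cons_of_mem i hi')

lemma foldD_X (L : List (Fin D)) (hnd : L.Nodup) (γ : Fin D → ℕ) (j : Fin D)
    (p : MvPolynomial (Fin n) ℝ) :
    L.foldr (stepD γ) (X (Fin.natAdd n j) * rename (Fin.castAdd D) p)
      = if ∀ i ∈ L, γ i = 0 then X (Fin.natAdd n j) * rename (Fin.castAdd D) p
        else if j ∈ L ∧ γ j = 1 ∧ ∀ i ∈ L, i ≠ j → γ i = 0 then rename (Fin.castAdd D) p
        else 0 := by
  induction L with
  | nil => simp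
  | cons i L ih =>
    have hndL : L.Nodup := (List.nodup_cons.mp hnd).2
    have hiL : i ∉ L := (List.nodup_cons.mp hnd).1
    rw [List.foldr_cons, ih hndL]
    by_cases hL : ∀ i' ∈ L, γ i' = 0
    · rw [if_pos hL]
      rcases Nat.lt_or_ge (γ i) 2 with hlt | hge
      · interval_cases h : γ i
        · rw [stepD, h, Function.iterate_zero_apply, if_pos]
          intro i' hi'
          rcases List.mem_cons.mp hi' with h' | h'
          · subst h'; exact h
          · exact hL i' h'
        · rw [stepD, h, Function.iterate_one, pderiv_natAdd_mul]
          by_cases hij : i = j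
          · subst hij
            rw [if_pos rfl, if_neg, if_pos]
            · exact ⟨List.mem_cons_self, h, fun i' hi' hne => by
                rcases List.mem_cons.mp hi' with h' | h'
                · exact absurd h' hne
                · exact hL i' h'⟩
            · intro hcon
              have := hcon i (List.mem_cons_self)
              omega
          · rw [if_neg hij, if_neg, if_neg]
            · rintro ⟨hjmem, hγj, hall⟩
              have := hall i (List.mem_cons_self) hij
              omega
            · intro hcon
              have := hcon i (List.mem_cons_self)
              omega
      · have h2 : pderiv (Fin.natAdd n i)
            (pderiv (Fin.natAdd n i) (X (Fin.natAdd n j) * rename (Fin.castAdd D) p)) = 0 := by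
          rw [pderiv_natAdd_mul]
          split
          · exact pderiv_rename_natAdd i p
          · simp
        rw [stepD, iter_of_step2_zero _ hge h2, if_neg, if_neg]
        · rintro ⟨hjmem, hγj, hall⟩
          by_cases hij : i = j
          · subst hij; omega
          · have := hall i (List.mem_cons_self) hij; omega
        · intro hcon
          have := hcon i (List.mem_cons_self)
          omega
    · rw [if_neg hL]
      by_cases hmid : j ∈ L ∧ γ j = 1 ∧ ∀ i' ∈ L, i' ≠ j → γ i' = 0
      · rw [if_pos hmid]
        have hij : i ≠ j := fun h => hiL (h ▸ hmid.1)
        by_cases hγi : γ i = 0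
        · rw [stepD, hγi, Function.iterate_zero_apply, if_neg, if_pos]
          · exact ⟨List.mem_cons_of_mem i hmid.1, hmid.2.1, fun i' hi' hne => by
              rcases List.mem_cons.mp hi' with h' | h'
              · subst h'; exact hγi
              · exact hmid.2.2 i' h' hne⟩
          · intro hcon
            have := hcon j (List.mem_cons_of_mem i hmid.1)
            omega
        · rw [stepD, iter_of_step_zero _ (Nat.one_le_iff_ne_zero.mpr hγi)
            (pderiv_rename_natAdd i p), if_neg, if_neg]
          · rintro ⟨-, -, hall⟩
            exact hγi (hall i (List.mem_cons_self) hij)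
          · intro hcon
            exact hL fun i' hi' => hcon i' (List.mem_cons_of_mem i hi')
      · rw [if_neg hmid, stepD, iter_pderiv_zero, if_neg, if_neg]
        · rintro ⟨hjmem, hγj, hall⟩
          rcases List.mem_cons.mp hjmem with h' | h'
          · exact hL fun i' hi' => hall i' (List.mem_cons_of_mem i hi')
              (fun he => hiL (by rw [he, h'] at hi'; exact hi'))
          · exact hmid ⟨h', hγj, fun i' hi' hne => hall i' (List.mem_cons_of_mem i hi') hne⟩
        · intro hcon
          exact hL fun i' hi' => hcon i' (List.mem_cons_of_mem i hi')

lemma iterN_rename (i : Fin n) (t : ℕ) (p : MvPolynomial (Fin n) ℝ) :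
    (fun r : MvPolynomial (Fin (n + D)) ℝ => pderiv (Fin.castAdd D i) r)^[t]
        (rename (Fin.castAdd D) p)
      = rename (Fin.castAdd D) ((fun r => pderiv i r)^[t] p) := by
  induction t generalizing p with
  | zero => simp
  | succ t ih => rw [Function.iterate_succ_apply, Function.iterate_succ_apply,
      pderiv_castAdd_rename, ih]

lemma iterN_X (i : Fin n) (j : Fin D) (t : ℕ) (p : MvPolynomial (Fin n) ℝ) :
    (fun r : MvPolynomial (Fin (n + D)) ℝ => pderiv (Fin.castAdd D i) r)^[t]
        (X (Fin.natAdd n j) * rename (Fin.castAdd D) p)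
      = X (Fin.natAdd n j) * rename (Fin.castAdd D) ((fun r => pderiv i r)^[t] p) := by
  induction t generalizing p with
  | zero => simp
  | succ t ih => rw [Function.iterate_succ_apply, Function.iterate_succ_apply,
      pderiv_castAdd_mul, ih]

lemma foldN_zero (L : List (Fin n)) (β : Fin n → ℕ) :
    L.foldr (stepN β) (0 : MvPolynomial (Fin (n + D)) ℝ) = 0 := by
  induction L with
  | nil => rfl
  | cons i L ih => simp only [List.foldr_cons, ih, stepN, iter_pderiv_zero]

lemma foldN_rename (L : List (Fin n)) (β : Fin n → ℕ) (p : MvPolynomial (Fin n) ℝ) :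
    L.foldr (stepN β) (rename (Fin.castAdd D) p)
      = rename (Fin.castAdd D)
          (L.foldr (fun i g => (fun r => pderiv i r)^[β i] g) p) := by
  induction L generalizing p with
  | nil => rfl
  | cons i L ih => rw [List.foldr_cons, ih, List.foldr_cons]; exact iterN_rename i (β i) _

lemma foldN_X (L : List (Fin n)) (β : Fin n → ℕ) (j : Fin D) (p : MvPolynomial (Fin n) ℝ) :
    L.foldr (stepN β) (X (Fin.natAdd n j) * rename (Fin.castAdd D) p)
      = X (Fin.natAdd n j) * rename (Fin.castAdd D)
          (L.foldr (fun i g => (fun r => pderiv i r)^[β i] g) p) := by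
  induction L generalizing p with
  | nil => rfl
  | cons i L ih => rw [List.foldr_cons, ih, List.foldr_cons]; exact iterN_X i j (β i) _

@[simp] lemma embed_castAdd (x : En n) (i : Fin n) : embed n D x (Fin.castAdd D i) = x i := by
  simp [embed, Fin.append_left]

@[simp] lemma embed_natAdd (x : En n) (j : Fin D) : embed n D x (Fin.natAdd n j) = 0 := by
  simp [embed, Fin.append_right]

@[simp] lemma projn_embed (x : En n) : projn n D (embed n D x) = x := by
  ext i
  simp [projn]

lemma dist_embed (x y : En n) : dist (embed n D x) (embed n D y) = dist x y := by
  rw [EuclideanSpace.dist_eq, EuclideanSpace.dist_eq]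
  congr 1
  rw [Fin.sum_univ_add]
  simp

lemma polyPD_lift (α : Fin (n + D) → ℕ) (j : Fin D) (p : MvPolynomial (Fin n) ℝ) :
    polyPD α (X (Fin.natAdd n j) * rename (Fin.castAdd D) p)
      = if ∀ i : Fin D, α (Fin.natAdd n i) = 0 then
          X (Fin.natAdd n j) * rename (Fin.castAdd D) (polyPD (fun i => α (Fin.castAdd D i)) p)
        else if α (Fin.natAdd n j) = 1 ∧ ∀ i : Fin D, i ≠ j → α (Fin.natAdd n i) = 0 then
          rename (Fin.castAdd D) (polyPD (fun i => α (Fin.castAdd D i)) p)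
        else 0 := by
  have e1 : polyPD α (X (Fin.natAdd n j) * rename (Fin.castAdd D) p)
      = (List.finRange n).foldr (stepN (fun i => α (Fin.castAdd D i)))
          ((List.finRange D).foldr (stepD (fun i => α (Fin.natAdd n i)))
            (X (Fin.natAdd n j) * rename (Fin.castAdd D) p)) := by
    rw [polyPD, finRange_split, List.foldr_append]
    simp only [List.foldr_map]
    rfl
  rw [e1, foldD_X _ (List.nodup_finRange D)]
  simp only [List.mem_finRange, true_implies, true_and]
  split_ifs with h1 h2
  · rw [foldN_X]; rfl
  · rw [foldN_rename]; rfl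
  · rw [foldN_zero]

lemma polyPDval_lift (α : Fin (n + D) → ℕ) (j : Fin D) (p : MvPolynomial (Fin n) ℝ)
    (x : En n) :
    polyPDval α (X (Fin.natAdd n j) * rename (Fin.castAdd D) p) (embed n D x)
      = if α (Fin.natAdd n j) = 1 ∧ ∀ i : Fin D, i ≠ j → α (Fin.natAdd n i) = 0 then
          polyPDval (fun i => α (Fin.castAdd D i)) p x
        else 0 := by
  have hev : ∀ q : MvPolynomial (Fin n) ℝ,
      eval (fun i => embed n D x i) (rename (Fin.castAdd D) q) = eval (fun i => x i) q := by
    intro q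
    have hc : ((fun i => embed n D x i) ∘ Fin.castAdd D) = fun i => x i := by
      funext i
      simp [Function.comp]
    rw [eval_rename, hc]
  rw [polyPDval, polyPD_lift]
  by_cases h2 : α (Fin.natAdd n j) = 1 ∧ ∀ i : Fin D, i ≠ j → α (Fin.natAdd n i) = 0
  · have h1 : ¬∀ i : Fin D, α (Fin.natAdd n i) = 0 := by
      intro h
      have ha := h2.1
      have hb := h j
      omega
    rw [if_neg h1, if_pos h2, if_pos h2, hev]
    rfl
  · rw [if_neg h2]
    by_cases h1 : ∀ i : Fin D, α (Fin.natAdd n i) = 0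
    · rw [if_pos h1, map_mul, eval_X]
      rw [embed_natAdd, zero_mul, if_neg h2]
    · rw [if_neg h1, if_neg h2, map_zero]

lemma polyPD_sub {N : ℕ} (α : Fin N → ℕ) (p q : MvPolynomial (Fin N) ℝ) :
    polyPD α (p - q) = polyPD α p - polyPD α q := by
  rw [polyPD, polyPD, polyPD]
  induction List.finRange N generalizing p q with
  | nil => simp
  | cons i L ih => simp only [List.foldr_cons, ih, iter_pderiv_sub]

lemma polyPDval_sub {N : ℕ} (α : Fin N → ℕ) (p q : MvPolynomial (Fin N) ℝ) (x : En N) :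
    polyPDval α (p - q) x = polyPDval α p x - polyPDval α q x := by
  rw [polyPDval, polyPDval, polyPDval, polyPD_sub, map_sub]

lemma polyPD_sum {N : ℕ} {ι : Type*} (α : Fin N → ℕ) (s : Finset ι)
    (f : ι → MvPolynomial (Fin N) ℝ) :
    polyPD α (∑ i ∈ s, f i) = ∑ i ∈ s, polyPD α (f i) := by
  classical
  induction s using Finset.induction_on with
  | empty =>
    simp only [Finset.sum_empty]
    rw [polyPD]
    induction List.finRange N with
    | nil => simp
    | cons i L ih => simp only [List.foldr_cons, ih, iter_pderiv_zero]
  | insert _ _ hns ih =>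
    rw [Finset.sum_insert hns, Finset.sum_insert hns, ← ih]
    rw [polyPD, polyPD, polyPD]
    generalize ∑ i ∈ _, f i = q
    induction List.finRange N generalizing q with
    | nil => simp
    | cons i L ih2 =>
      simp only [List.foldr_cons, ih2]
      induction α i with
      | zero => simp
      | succ t ih3 => simp only [Function.iterate_succ_apply', ih3, map_add]

lemma polyPDval_sum {N : ℕ} {ι : Type*} (α : Fin N → ℕ) (s : Finset ι)
    (f : ι → MvPolynomial (Fin N) ℝ) (x : En N) :
    polyPDval α (∑ i ∈ s, f i) x = ∑ i ∈ s, polyPDval α (f i) x := by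
  rw [polyPDval, polyPD_sum, map_sum]
  rfl

end GTaux

/-- **The gradient trick on Whitney fields** (Section 5): given a Whitney field
`(P⃗^x)_{x∈S}` of `Ẇ^m(S)`-seminorm `≤ M₀`, the lifted scalar Whitney field
`P^{(x,0)}(y,ξ) = Σ_j ξ_j P^x_j(y)` on `S⁺ = S × {0} ⊆ ℝ^{n+D}` has
`Ẇ^{m+1}(S⁺)`-seminorm `≤ C·M₀`, with `C = C(m,n,D)`. -/
theorem gradient_trick_whitney_field
    (m n D : ℕ) (hm : 1 ≤ m) (hn : 1 ≤ n) (hD : 1 ≤ D) :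
    ∃ C : ℝ, 0 < C ∧
      ∀ S : Finset (En n), ∀ P : En n → Fin D → MvPolynomial (Fin n) ℝ,
        (∀ x ∈ S, ∀ j, (P x j).totalDegree ≤ m - 1) →
        ∀ M₀ : ℝ, WSemiLE m S P M₀ →
          WSemiLE (m + 1) (S.image (embed n D))
            (fun z => fun _ : Fin 1 =>
              ∑ j : Fin D, MvPolynomial.X (Fin.natAdd n j) *
                MvPolynomial.rename (Fin.castAdd D) (P (projn n D z) j))
            (C * M₀) := by
  classical
  refine ⟨1, one_pos, ?_⟩
  intro S P hdeg M₀ hW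
  intro z hz w hw hzw α hα j
  rw [Finset.mem_image] at hz hw
  obtain ⟨x, hxS, rfl⟩ := hz
  obtain ⟨y, hyS, rfl⟩ := hw
  have hxy : x ≠ y := fun h => hzw (by rw [h])
  have hdxy : (0:ℝ) < dist x y := dist_pos.mpr hxy
  have hM₀ : 0 ≤ M₀ := by
    have h0 := hW x hxS y hyS hxy (fun _ => 0) (by simp) ⟨0, hD⟩
    have h1 : (0:ℝ) ≤ M₀ * dist x y ^ (m - ∑ i : Fin n, (0:ℕ)) :=
      le_trans (abs_nonneg _) h0
    have h2 : (0:ℝ) < dist x y ^ (m - ∑ i : Fin n, (0:ℕ)) :=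
      pow_pos hdxy _
    nlinarith
  have hα' : ∑ i : Fin (n + D), α i ≤ m := by
    simpa using hα
  simp only [GTaux.projn_embed]
  rw [one_mul, GTaux.dist_embed]
  have hsub : (∑ j' : Fin D, MvPolynomial.X (Fin.natAdd n j') *
        MvPolynomial.rename (Fin.castAdd D) (P x j'))
      - (∑ j' : Fin D, MvPolynomial.X (Fin.natAdd n j') *
        MvPolynomial.rename (Fin.castAdd D) (P y j'))
      = ∑ j' : Fin D, MvPolynomial.X (Fin.natAdd n j') *
          MvPolynomial.rename (Fin.castAdd D) (P x j' - P y j') := by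
    rw [← Finset.sum_sub_distrib]
    refine Finset.sum_congr rfl fun j' _ => ?_
    rw [map_sub, mul_sub]
  rw [hsub, GTaux.polyPDval_sum]
  rw [Finset.sum_congr rfl fun j' _ => GTaux.polyPDval_lift α j' (P x j' - P y j') x]
  by_cases hex : ∃ j₀ : Fin D, α (Fin.natAdd n j₀) = 1 ∧
      ∀ i : Fin D, i ≠ j₀ → α (Fin.natAdd n i) = 0
  · obtain ⟨j₀, hj₀⟩ := hex
    have hsum : ∑ j' : Fin D,
        (if α (Fin.natAdd n j') = 1 ∧ ∀ i : Fin D, i ≠ j' → α (Fin.natAdd n i) = 0 then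
          polyPDval (fun i => α (Fin.castAdd D i)) (P x j' - P y j') x else 0)
        = polyPDval (fun i => α (Fin.castAdd D i)) (P x j₀ - P y j₀) x := by
      rw [Finset.sum_eq_single_of_mem j₀ (Finset.mem_univ _)]
      · rw [if_pos hj₀]
      · intro j' _ hne
        rw [if_neg]
        rintro ⟨h1, h2⟩
        have := hj₀.2 j' hne
        omega
    rw [hsum]
    have hsplit : ∑ i : Fin (n + D), α i
        = (∑ i : Fin n, α (Fin.castAdd D i)) + ∑ i : Fin D, α (Fin.natAdd n i) :=
      Fin.sum_univ_add _
    have hγ : ∑ i : Fin D, α (Fin.natAdd n i) = 1 := by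
      rw [Finset.sum_eq_single_of_mem j₀ (Finset.mem_univ _)]
      · exact hj₀.1
      · intro i _ hne
        exact hj₀.2 i hne
    have hβ : (∑ i : Fin n, α (Fin.castAdd D i)) ≤ m - 1 := by omega
    have hbound := hW x hxS y hyS hxy (fun i => α (Fin.castAdd D i)) hβ j₀
    have hexp : m + 1 - ∑ i : Fin (n + D), α i
        = m - ∑ i : Fin n, α (Fin.castAdd D i) := by omega
    rw [hexp]
    exact hbound
  · have hsum : ∑ j' : Fin D,
        (if α (Fin.natAdd n j') = 1 ∧ ∀ i : Fin D, i ≠ j' → α (Fin.natAdd n i) = 0 then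
          polyPDval (fun i => α (Fin.castAdd D i)) (P x j' - P y j') x else 0) = 0 := by
      refine Finset.sum_eq_zero fun j' _ => ?_
      rw [if_neg]
      intro h
      exact hex ⟨j', h⟩
    rw [hsum, abs_zero]
    exact mul_nonneg hM₀ (pow_nonneg dist_nonneg _)
end
end
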